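/- arXiv:math/0309360 — 2 statements merged into one kernel-verified Lean document; each statement's English description precedes it below -/
import Mathlib

section
/- Let R be an integral domain with quotient field K and M a maximal ideal of R with finite residue field such that R_M is a discrete valuation ring. If (0) ⊊ P₁ ⊊ P₂ is a maximal chain of prime ideals in Int(R_M), then P₁ = fK[X] ∩ Int(R_M) for some irreducible polynomial f ∈ K[X], and the contractions (0) ⊊ fK[X] ∩ (Int(R))_M ⊊ P₂ ∩ (Int(R))_M form a chain of length 2 of primes in (Int(R))_M; in particular dim((Int(R))_M) ≥ 2. -/
set_option linter.unusedSectionVars false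
set_option linter.unusedVariables false



/- Preamble: integer-valued polynomials and essential domains. -/

noncomputable section

open Polynomial

/-- The image in the quotient field `FractionRing R` of the localization `R_p` of `R`
at (the complement of) an ideal `p`, as a subset of `FractionRing R`. -/
def locSet (R : Type*) [CommRing R] [IsDomain R] (p : Ideal R) : Set (FractionRing R) :=
  {x | ∃ a s : R, s ∉ p ∧ x = algebraMap R (FractionRing R) a / algebraMap R (FractionRing R) s}

/-- An integral domain `R` is *essential* if there is a set `Δ` of prime ideals of `R`
such that `R = ⋂_{p ∈ Δ} R_p` (inside the quotient field) and each `R_p` is a valuation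
domain (equivalently, for every `x` in the quotient field, `x ∈ R_p` or `x⁻¹ ∈ R_p`). -/
def IsEssential (R : Type*) [CommRing R] [IsDomain R] : Prop :=
  ∃ Δ : Set (Ideal R),
    (∀ p ∈ Δ, p.IsPrime) ∧
    (∀ p ∈ Δ, ∀ x : FractionRing R, x ∈ locSet R p ∨ x⁻¹ ∈ locSet R p) ∧
    Set.range (algebraMap R (FractionRing R)) = ⋂ p ∈ Δ, locSet R p

/-- An integral domain `R` is *locally essential* if `R_q` is an essential domain for
every prime ideal `q` of `R`. -/
def IsLocallyEssential (R : Type*) [CommRing R] [IsDomain R] : Prop :=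
  ∀ (q : Ideal R) (hq : q.IsPrime), IsEssential (Localization (@Ideal.primeCompl R _ q hq))

/-- The ring `Int(R) = {f ∈ K[X] : f(R) ⊆ R}` of integer-valued polynomials over `R`,
as a subring of `K[X]` where `K` is the quotient field of `R`. -/
def IntPoly (R : Type*) [CommRing R] [IsDomain R] : Subring (Polynomial (FractionRing R)) :=
  ⨅ a : R, Subring.comap (Polynomial.evalRingHom (algebraMap R (FractionRing R) a))
    (algebraMap R (FractionRing R)).range

end

noncomputable section AuxLV
open Polynomial

variable {R : Type*} [CommRing R] [IsDomain R] {M : Ideal R}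

local notation "K" => FractionRing R
local notation "φ" => algebraMap R (FractionRing R)

lemma phi_ne_zero {s : R} (hs : s ≠ 0) : φ s ≠ 0 := by
  simpa using (map_ne_zero_iff _ (IsFractionRing.injective R K)).mpr hs

lemma notMem_ne_zero [hMp : M.IsPrime] {s : R} (hs : s ∉ M) : s ≠ 0 :=
  fun h => hs (h ▸ M.zero_mem)

lemma loc_algebraMap [hMp : M.IsPrime] (a : R) : φ a ∈ locSet R M :=
  ⟨a, 1, by simpa using hMp.ne_top ∘ (Ideal.eq_top_of_isUnit_mem M · isUnit_one), by simp⟩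

lemma loc_zero [hMp : M.IsPrime] : (0 : K) ∈ locSet R M := by
  simpa using loc_algebraMap (M := M) 0

lemma loc_one [hMp : M.IsPrime] : (1 : K) ∈ locSet R M := by
  simpa using loc_algebraMap (M := M) 1

lemma loc_add [hMp : M.IsPrime] {x y : K} (hx : x ∈ locSet R M) (hy : y ∈ locSet R M) :
    x + y ∈ locSet R M := by
  obtain ⟨a, s, hs, rfl⟩ := hx
  obtain ⟨b, t, ht, rfl⟩ := hy
  refine ⟨a * t + b * s, s * t, fun h => ((hMp.mem_or_mem h).elim hs ht), ?_⟩
  have hs0 : φ s ≠ 0 := phi_ne_zero (notMem_ne_zero hs)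
  have ht0 : φ t ≠ 0 := phi_ne_zero (notMem_ne_zero ht)
  field_simp
  simp only [map_add, map_mul]
  ring

lemma loc_mul [hMp : M.IsPrime] {x y : K} (hx : x ∈ locSet R M) (hy : y ∈ locSet R M) :
    x * y ∈ locSet R M := by
  obtain ⟨a, s, hs, rfl⟩ := hx
  obtain ⟨b, t, ht, rfl⟩ := hy
  refine ⟨a * b, s * t, fun h => ((hMp.mem_or_mem h).elim hs ht), ?_⟩
  push_cast [map_mul]
  ring

lemma loc_neg [hMp : M.IsPrime] {x : K} (hx : x ∈ locSet R M) : -x ∈ locSet R M := by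
  obtain ⟨a, s, hs, rfl⟩ := hx
  exact ⟨-a, s, hs, by push_cast [map_neg]; ring⟩

lemma loc_div [hMp : M.IsPrime] {x : K} (hx : x ∈ locSet R M) {s : R} (hs : s ∉ M) :
    x / φ s ∈ locSet R M := by
  obtain ⟨a, t, ht, rfl⟩ := hx
  refine ⟨a, t * s, fun h => ((hMp.mem_or_mem h).elim ht hs), ?_⟩
  rw [map_mul, div_div]

/-- `locSet R M` as a subring of `K`. -/
def locSR (M : Ideal R) [hMp : M.IsPrime] : Subring K where
  carrier := locSet R M
  one_mem' := loc_one
  zero_mem' := loc_zero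
  add_mem' := loc_add
  mul_mem' := loc_mul
  neg_mem' := loc_neg

lemma mem_locSR [hMp : M.IsPrime] {x : K} : x ∈ locSR M ↔ x ∈ locSet R M := Iff.rfl


/-- Evaluation of a polynomial having coefficients in a subring at a point of the subring. -/
lemma eval_mem_subring (S : Subring K) {p : K[X]} (hp : ∀ n, p.coeff n ∈ S) {x : K}
    (hx : x ∈ S) : p.eval x ∈ S := by
  rw [Polynomial.eval_eq_sum_range]
  exact Subring.sum_mem S fun i _ => S.mul_mem (hp i) (S.pow_mem hx i)

lemma exists_cofactor (S : Subring K) {p : K[X]} (hp : ∀ n, p.coeff n ∈ S) {x y : K}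
    (hx : x ∈ S) (hy : y ∈ S) :
    ∃ c ∈ S, p.eval x - p.eval y = (x - y) * c := by
  have hp' : (↑p.coeffs : Set K) ⊆ S := by
    intro z hz
    rw [Finset.mem_coe, Polynomial.mem_coeffs_iff] at hz
    obtain ⟨n, _, rfl⟩ := hz
    exact hp n
  set q := p.toSubring S hp' with hq
  obtain ⟨c, hc⟩ := Polynomial.sub_dvd_eval_sub (⟨x, hx⟩ : S) (⟨y, hy⟩ : S) q
  refine ⟨(c : K), c.2, ?_⟩
  have hmap : ∀ z : S, (S.subtype) (q.eval z) = p.eval (z : K) := by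
    intro z
    have : p = q.map S.subtype := (Polynomial.map_toSubring p S hp').symm
    rw [this, Polynomial.eval_map]
    exact (Polynomial.eval₂_hom S.subtype z).symm
  have := congrArg S.subtype hc
  simp only [RingHom.map_sub, RingHom.map_mul, hmap] at this
  simpa using this

/-- common denominator for a polynomial over the fraction field -/
lemma exists_poly_denom (p : K[X]) :
    ∃ (d : R) (q : R[X]), d ≠ 0 ∧ q.map φ = Polynomial.C (φ d) * p := by
  obtain ⟨b, hb⟩ := IsLocalization.integerNormalization_map_to_map (nonZeroDivisors R) p
  refine ⟨(b : R), IsLocalization.integerNormalization (nonZeroDivisors R) p,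
    nonZeroDivisors.coe_ne_zero b, ?_⟩
  rw [hb, ← IsScalarTower.algebraMap_smul K ((b : R)) p, Polynomial.smul_eq_C_mul]

lemma map_mem_IntPoly (q : R[X]) : q.map φ ∈ IntPoly R := by
  rw [IntPoly, Subring.mem_iInf]
  intro a
  rw [Subring.mem_comap]
  refine ⟨q.eval a, ?_⟩
  simp only [Polynomial.coe_evalRingHom, Polynomial.eval_map]
  exact (Polynomial.eval₂_hom (algebraMap R K) a).symm


lemma primeCompl_le_nzd [hMp : M.IsPrime] :
    M.primeCompl ≤ Submonoid.comap (RingHom.id R) (nonZeroDivisors R) := fun s hs =>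
  mem_nonZeroDivisors_of_ne_zero (notMem_ne_zero (M := M) hs)

/-- Key divisibility lemma coming from the DVR hypothesis. -/
lemma lemA [hMp : M.IsPrime] (hdvr : IsDiscreteValuationRing (Localization.AtPrime M))
    {d : R} (hd : d ≠ 0) :
    ∃ m : ℕ, ∀ μ ∈ M ^ m, ∀ w ∈ locSet R M,
      ∃ w' ∈ locSet R M, φ μ * w = φ d * w' := by
  classical
  set L := Localization.AtPrime M
  have hle := primeCompl_le_nzd (M := M)
  set ψ : L →+* K := IsLocalization.map (FractionRing R) (RingHom.id R) hle with hψdef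
  have hψ : ∀ r : R, ψ (algebraMap R L r) = φ r := fun r =>
    IsLocalization.map_eq (S := L) (Q := FractionRing R) hle r
  have hinj : Function.Injective (algebraMap R L) :=
    IsLocalization.injective L (fun s hs => hle hs)
  have hd0 : algebraMap R L d ≠ 0 := fun h => hd (hinj (by simpa using h))
  obtain ⟨ϖ, hϖ⟩ := IsDiscreteValuationRing.exists_irreducible L
  obtain ⟨m, u, hmu⟩ := IsDiscreteValuationRing.eq_unit_mul_pow_irreducible hd0 hϖ
  have hmax : IsLocalRing.maximalIdeal L = Ideal.span {ϖ} :=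
    (IsDiscreteValuationRing.irreducible_iff_uniformizer ϖ).mp hϖ
  have hspan : (IsLocalRing.maximalIdeal L) ^ m = Ideal.span {algebraMap R L d} := by
    have hass : Associated (ϖ ^ m) (algebraMap R L d) := ⟨u, by rw [hmu]; ring⟩
    rw [hmax, Ideal.span_singleton_pow, Ideal.span_singleton_eq_span_singleton.mpr hass]
  refine ⟨m, fun μ hμ w hw => ?_⟩
  have hmem : algebraMap R L μ ∈ Ideal.span {algebraMap R L d} := by
    rw [← hspan, ← Localization.AtPrime.map_eq_maximalIdeal, ← Ideal.map_pow]
    exact Ideal.mem_map_of_mem _ hμ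
  obtain ⟨z, hz⟩ := Ideal.mem_span_singleton'.mp hmem
  obtain ⟨⟨p, t⟩, hpt⟩ := IsLocalization.mk'_surjective M.primeCompl z
  dsimp only at hpt
  have hzloc : ψ z ∈ locSet R M := by
    rw [← hpt, hψdef, IsLocalization.map_mk']
    refine ⟨p, (t : R), t.2, ?_⟩
    simp [IsFractionRing.mk'_eq_div]
  refine ⟨ψ z * w, loc_mul hzloc hw, ?_⟩
  have : φ μ = φ d * ψ z := by
    rw [← hψ μ, ← hz, RingHom.map_mul, hψ d]; ring
  rw [this]; ring

/-- comaximality of `M ^ m` and `s ∉ M` for `M` maximal. -/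
lemma comax [hM : M.IsMaximal] {s : R} (hs : s ∉ M) (m : ℕ) :
    ∃ t r : R, r ∈ M ^ m ∧ t * s + r = 1 := by
  have hsup : M ^ m ⊔ Ideal.span {s} = ⊤ := by
    by_contra hne
    obtain ⟨N, hNmax, hN⟩ := Ideal.exists_le_maximal _ hne
    have hpowN : M ^ m ≤ N := le_sup_left.trans hN
    have hMN : M ≤ N := by
      rcases Nat.eq_zero_or_pos m with hm | hm
      · exfalso
        apply hNmax.ne_top
        rw [eq_top_iff]
        simpa [hm] using hpowN
      · exact (Ideal.IsPrime.pow_le_iff hm.ne').mp hpowN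
    have hNM : N = M := (hM.eq_of_le hNmax.ne_top hMN).symm
    have hsN : Ideal.span {s} ≤ N := le_sup_right.trans hN
    exact hs (hNM ▸ hsN (Ideal.subset_span rfl))
  have h1 : (1 : R) ∈ M ^ m ⊔ Ideal.span {s} := hsup ▸ Submodule.mem_top
  obtain ⟨r, hr, y, hy, hry⟩ := Submodule.mem_sup.mp h1
  obtain ⟨t, rfl⟩ := Ideal.mem_span_singleton'.mp hy
  exact ⟨t, r, hr, by linear_combination hry⟩

/-- Approximation: every element of `R_M` is congruent to an element of `R` modulo `d`. -/
lemma lemB [hM : M.IsMaximal] (hdvr : IsDiscreteValuationRing (Localization.AtPrime M))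
    {d : R} (hd : d ≠ 0) {x : K} (hx : x ∈ locSet R M) :
    ∃ b : R, ∃ w ∈ locSet R M, x = φ b + φ d * w := by
  obtain ⟨m, hm⟩ := lemA (M := M) hdvr hd
  obtain ⟨a, s, hs, rfl⟩ := hx
  obtain ⟨t, r, hr, htr⟩ := comax (M := M) hs m
  have hs0 : φ s ≠ 0 := phi_ne_zero (notMem_ne_zero hs)
  have hxmem : φ a / φ s ∈ locSet R M := ⟨a, s, hs, rfl⟩
  obtain ⟨w', hw', hww⟩ := hm r hr (φ a / φ s) hxmem
  refine ⟨a * t, w', hw', ?_⟩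
  have key : φ a / φ s - φ (a * t) = φ r * (φ a / φ s) := by
    have hr' : φ r = 1 - φ t * φ s := by
      rw [show r = 1 - t * s by linear_combination htr, map_sub, map_one, map_mul]
    rw [hr', map_mul]
    field_simp
  linear_combination key + hww


lemma mem_IntPoly_iff {h : Polynomial K} :
    h ∈ IntPoly R ↔ ∀ a : R, ∃ b : R, h.eval (φ a) = φ b := by
  rw [IntPoly, Subring.mem_iInf]
  refine forall_congr' fun a => ?_
  rw [Subring.mem_comap]
  constructor
  · rintro ⟨b, hb⟩; exact ⟨b, hb.symm⟩
  · rintro ⟨b, hb⟩; exact ⟨b, hb.symm⟩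

/-- An integer-valued polynomial maps the localization `R_M` into itself. -/
lemma intPoly_eval_mem [hM : M.IsMaximal] (hdvr : IsDiscreteValuationRing (Localization.AtPrime M))
    {h : Polynomial K} (hh : h ∈ IntPoly R) {x : K} (hx : x ∈ locSet R M) :
    h.eval x ∈ locSet R M := by
  have hMp : M.IsPrime := hM.isPrime
  obtain ⟨d, q, hd, hq⟩ := exists_poly_denom h
  obtain ⟨b, w, hw, hxw⟩ := lemB (M := M) hdvr hd hx
  have hd0 : φ d ≠ 0 := phi_ne_zero hd
  set p : Polynomial K := q.map φ with hp
  have hcoeff : ∀ n, p.coeff n ∈ locSR M := by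
    intro n
    rw [hp, Polynomial.coeff_map]
    exact loc_algebraMap _
  have hb : φ b ∈ locSR M := loc_algebraMap b
  obtain ⟨c, hc, hcc⟩ := exists_cofactor (locSR M) hcoeff (hx : x ∈ locSR M) hb
  obtain ⟨rb, hrb⟩ := mem_IntPoly_iff.mp hh b
  have hpx : p.eval x = φ d * h.eval x := by rw [hq]; simp
  have hpb : p.eval (φ b) = φ d * φ rb := by rw [hq]; simp [hrb]
  have hxb : x - φ b = φ d * w := by linear_combination hxw
  have : φ d * h.eval x = φ d * (φ rb + w * c) := by
    have := hcc
    rw [hpx, hpb, hxb] at this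
    linear_combination this
  have heq : h.eval x = φ rb + w * c := mul_left_cancel₀ hd0 this
  rw [heq]
  exact loc_add (loc_algebraMap rb) (loc_mul hw hc)

/-- For `v` in the localization, `v ^ q - v` lies in `M ⬝ R_M`, where `q` is the
cardinality of the residue field. -/
lemma pow_card_sub_self [hM : M.IsMaximal] [hfin : Finite (R ⧸ M)] {v : K}
    (hv : v ∈ locSet R M) :
    ∃ μ ∈ M, ∃ w ∈ locSet R M, v ^ (Nat.card (R ⧸ M)) - v = φ μ * w := by
  classical
  have hMp : M.IsPrime := hM.isPrime
  letI : Field (R ⧸ M) := Ideal.Quotient.field M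
  letI : Fintype (R ⧸ M) := Fintype.ofFinite _
  set q := Nat.card (R ⧸ M) with hqdef
  have hq : q = Fintype.card (R ⧸ M) := Nat.card_eq_fintype_card
  have hq1 : 1 ≤ q := by
    rw [hq]; exact Fintype.card_pos
  obtain ⟨a, s, hs, rfl⟩ := hv
  have hs0 : φ s ≠ 0 := phi_ne_zero (notMem_ne_zero hs)
  refine ⟨a ^ q - a * s ^ (q - 1), ?_, (φ s ^ q)⁻¹, ?_, ?_⟩
  · -- numerator is in M
    rw [← Ideal.Quotient.eq_zero_iff_mem]
    have h1 : (Ideal.Quotient.mk M a) ^ q = Ideal.Quotient.mk M a := by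
      rw [hq]; exact FiniteField.pow_card _
    have h2 : (Ideal.Quotient.mk M s) ^ (q - 1) = 1 := by
      rw [hq]
      exact FiniteField.pow_card_sub_one_eq_one _
        (by rwa [Ne, Ideal.Quotient.eq_zero_iff_mem])
    push_cast [map_sub, map_mul, map_pow]
    rw [h1, h2]
    ring
  · refine ⟨1, s ^ q, fun hmem => hs (hMp.mem_of_pow_mem _ hmem), ?_⟩
    rw [map_one, map_pow, one_div]
  · obtain ⟨k, hk⟩ : ∃ k, q = k + 1 := ⟨q - 1, (Nat.succ_pred_eq_of_pos hq1).symm⟩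
    rw [map_sub, map_mul, map_pow, map_pow, hk]
    simp only [Nat.add_sub_cancel]
    rw [div_pow]
    field_simp
    ring


section SpanAux
variable {T : Subring (Polynomial (FractionRing R))}

lemma hCT (hRX : ∀ q : Polynomial R, q.map φ ∈ T) (e : R) : Polynomial.C (φ e) ∈ T := by
  simpa using hRX (Polynomial.C e)

lemma aux_clear (hRX : ∀ q : Polynomial R, q.map φ ∈ T) (P : Ideal T) {z : Polynomial K}
    (hz : z ∈ Ideal.span (Subtype.val '' (P : Set T))) :
    ∃ e : R, e ≠ 0 ∧ ∃ p ∈ P, (p : Polynomial K) = Polynomial.C (φ e) * z := by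
  refine Submodule.span_induction ?_ ?_ ?_ ?_ hz
  · rintro x ⟨p, hp, rfl⟩
    exact ⟨1, one_ne_zero, p, hp, by simp⟩
  · exact ⟨1, one_ne_zero, 0, P.zero_mem, by simp⟩
  · rintro x y hx hy ⟨ea, hea, pa, hpa, hva⟩ ⟨eb, heb, pb, hpb, hvb⟩
    refine ⟨ea * eb, mul_ne_zero hea heb,
      ⟨Polynomial.C (φ eb), hCT hRX eb⟩ * pa + ⟨Polynomial.C (φ ea), hCT hRX ea⟩ * pb,
      P.add_mem (P.mul_mem_left _ hpa) (P.mul_mem_left _ hpb), ?_⟩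
    push_cast
    rw [hva, hvb]
    simp only [map_mul, Polynomial.C_mul]
    ring
  · rintro k x hx ⟨ez, hez, pz, hpz, hvz⟩
    obtain ⟨d, qq, hd, hqq⟩ := exists_poly_denom k
    refine ⟨d * ez, mul_ne_zero hd hez, ⟨qq.map φ, hRX qq⟩ * pz,
      P.mul_mem_left _ hpz, ?_⟩
    push_cast
    rw [smul_eq_mul, hvz, hqq]
    simp only [map_mul, Polynomial.C_mul]
    ring

lemma hCnotP (hRX : ∀ q : Polynomial R, q.map φ ∈ T) (P : Ideal T)
    (hnc : ∀ p ∈ P, ∀ w : K, (p : Polynomial K) = Polynomial.C w → w = 0)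
    {e : R} (he : e ≠ 0) : (⟨Polynomial.C (φ e), hCT hRX e⟩ : T) ∉ P := fun hmem =>
  phi_ne_zero he (hnc _ hmem (φ e) rfl)

lemma aux_span_prime (hRX : ∀ q : Polynomial R, q.map φ ∈ T) (P : Ideal T) (hP : P.IsPrime)
    (hnc : ∀ p ∈ P, ∀ w : K, (p : Polynomial K) = Polynomial.C w → w = 0) :
    (Ideal.span (Subtype.val '' (P : Set T))).IsPrime := by
  constructor
  · intro htop
    rw [Ideal.eq_top_iff_one] at htop
    obtain ⟨e, he, p, hp, hv⟩ := aux_clear hRX P htop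
    rw [mul_one] at hv
    exact hCnotP hRX P hnc he (by rwa [show (⟨Polynomial.C (φ e), hCT hRX e⟩ : T) = p from (Subtype.ext hv).symm])
  · intro a b hab
    obtain ⟨e, he, p, hp, hv⟩ := aux_clear hRX P hab
    obtain ⟨da, qa, hda, hqa⟩ := exists_poly_denom a
    obtain ⟨db, qb, hdb, hqb⟩ := exists_poly_denom b
    set tA : T := ⟨qa.map φ, hRX qa⟩
    set tB : T := ⟨qb.map φ, hRX qb⟩
    have h1 : (⟨Polynomial.C (φ (da * db)), hCT hRX _⟩ : T) * p =
        ⟨Polynomial.C (φ e), hCT hRX e⟩ * (tA * tB) := by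
      apply Subtype.ext
      show Polynomial.C (φ (da * db)) * (p : Polynomial K) = Polynomial.C (φ e) * (qa.map φ * qb.map φ)
      rw [hv, hqa, hqb]
      simp only [map_mul, Polynomial.C_mul]
      ring
    have h2 : (⟨Polynomial.C (φ e), hCT hRX e⟩ : T) * (tA * tB) ∈ P := by
      rw [← h1]; exact P.mul_mem_left _ hp
    rcases hP.mem_or_mem h2 with hc | hmul
    · exact absurd hc (hCnotP hRX P hnc he)
    rcases hP.mem_or_mem hmul with hA | hB
    · left
      have : a = Polynomial.C (φ da)⁻¹ * (tA : Polynomial K) := by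
        show a = Polynomial.C (φ da)⁻¹ * (qa.map φ)
        rw [hqa, ← mul_assoc, ← Polynomial.C_mul, inv_mul_cancel₀ (phi_ne_zero hda),
          Polynomial.C_1, one_mul]
      rw [this]
      exact Ideal.mul_mem_left _ _ (Ideal.subset_span ⟨tA, hA, rfl⟩)
    · right
      have : b = Polynomial.C (φ db)⁻¹ * (tB : Polynomial K) := by
        show b = Polynomial.C (φ db)⁻¹ * (qb.map φ)
        rw [hqb, ← mul_assoc, ← Polynomial.C_mul, inv_mul_cancel₀ (phi_ne_zero hdb),
          Polynomial.C_1, one_mul]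
      rw [this]
      exact Ideal.mul_mem_left _ _ (Ideal.subset_span ⟨tB, hB, rfl⟩)

end SpanAux
end AuxLV


set_option maxHeartbeats 1000000 in
open Polynomial in
/-- Let `R` be an integral domain with quotient field `K` and `M` a
maximal ideal with finite residue field such that `R_M` is a DVR.  If
`(0) ⊊ P₁ ⊊ P₂` is a maximal chain of primes of `Int(R_M)` (realized as the subring
`T = {f ∈ K[X] : f(R_M) ⊆ R_M}` of `K[X]`), then `P₁ = fK[X] ∩ Int(R_M)` for some
irreducible `f ∈ K[X]`, and the contractions
`(0) ⊊ fK[X] ∩ (Int(R))_M ⊊ P₂ ∩ (Int(R))_M` form a length-two chain of primes of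
`(Int(R))_M`; in particular `dim((Int(R))_M) ≥ 2`. -/
theorem exists_irreducible_and_chain_in_locIntPoly
    (R : Type*) [CommRing R] [IsDomain R]
    (M : Ideal R) [hM : M.IsMaximal] [hfin : Finite (R ⧸ M)]
    (hdvr : IsDiscreteValuationRing (Localization.AtPrime M))
    (T : Subring (Polynomial (FractionRing R)))
    (hT : (T : Set (Polynomial (FractionRing R))) =
      {f : Polynomial (FractionRing R) | ∀ x ∈ locSet R M, f.eval x ∈ locSet R M})
    (P₁ P₂ : Ideal T) (hP₁ : P₁.IsPrime) (hP₂ : P₂.IsPrime)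
    (h01 : ⊥ < P₁) (h12 : P₁ < P₂) (hP₂max : P₂.IsMaximal)
    (hsat01 : ∀ Q : Ideal T, Q.IsPrime → ¬(⊥ < Q ∧ Q < P₁))
    (hsat12 : ∀ Q : Ideal T, Q.IsPrime → ¬(P₁ < Q ∧ Q < P₂)) :
    ∃ f : Polynomial (FractionRing R), Irreducible f ∧
      (Subtype.val '' (P₁ : Set T) = {g : Polynomial (FractionRing R) | g ∈ T ∧ f ∣ g}) ∧
      ∀ T' : Subring (Polynomial (FractionRing R)),
        (T' : Set (Polynomial (FractionRing R))) =
          {g : Polynomial (FractionRing R) | ∃ h ∈ IntPoly R, ∃ s : R, s ∉ M ∧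
            g = Polynomial.C ((algebraMap R (FractionRing R)) s)⁻¹ * h} →
        ∃ Q₁ Q₂ : Ideal T', Q₁.IsPrime ∧ Q₂.IsPrime ∧ ⊥ < Q₁ ∧ Q₁ < Q₂ ∧
          Subtype.val '' (Q₁ : Set T') =
            {g : Polynomial (FractionRing R) | g ∈ T' ∧ f ∣ g} ∧
          Subtype.val '' (Q₂ : Set T') =
            (T' : Set (Polynomial (FractionRing R))) ∩ Subtype.val '' (P₂ : Set T) ∧
          2 ≤ ringKrullDim T' := by
  classical
  have hMp : M.IsPrime := hM.isPrime
  -- abbreviation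
  set φ := algebraMap R (FractionRing R) with hφdef
  -- membership criterion for `T`
  have hTmem : ∀ g : Polynomial (FractionRing R),
      g ∈ T ↔ ∀ x ∈ locSet R M, g.eval x ∈ locSet R M := by
    intro g
    constructor
    · intro hg
      have : g ∈ (T : Set (Polynomial (FractionRing R))) := hg
      rw [hT] at this
      exact this
    · intro hg
      have : g ∈ (T : Set (Polynomial (FractionRing R))) := by rw [hT]; exact hg
      exact this
  have hRXT : ∀ q : Polynomial R, q.map φ ∈ T := by
    intro q
    rw [hTmem]
    intro x hx
    refine eval_mem_subring (locSR M) (fun n => ?_) hx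
    rw [Polynomial.coeff_map]
    exact loc_algebraMap _
  -- Step A : `P₁` contains no nonzero constant
  have hconstP₁ : ∀ p ∈ P₁, ∀ w : FractionRing R, (p : Polynomial (FractionRing R)) =
      Polynomial.C w → w = 0 := by
    intro p hp w hpw
    by_contra hw0
    have hwmem : w ∈ locSet R M := by
      have := (hTmem (p : Polynomial (FractionRing R))).mp (SetLike.coe_mem p) 0 loc_zero
      rw [hpw] at this; simpa using this
    obtain ⟨a, s, hs, hws⟩ := hwmem
    have hs0 : φ s ≠ 0 := phi_ne_zero (notMem_ne_zero hs)
    have ha0 : a ≠ 0 := by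
      intro h
      apply hw0
      rw [hws, h, map_zero, zero_div]
    -- C (φ a) lies in P₁
    have hCa : (⟨Polynomial.C (φ a), hCT hRXT a⟩ : T) ∈ P₁ := by
      have hmul : (⟨Polynomial.C (φ s), hCT hRXT s⟩ : T) * p ∈ P₁ := P₁.mul_mem_left _ hp
      have heq : (⟨Polynomial.C (φ s), hCT hRXT s⟩ : T) * p
          = ⟨Polynomial.C (φ a), hCT hRXT a⟩ := by
        apply Subtype.ext
        push_cast
        rw [hpw, hws, ← Polynomial.C_mul]
        congr 1
        field_simp
        exact mul_div_cancel_left₀ _ hs0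
      rwa [heq] at hmul
    -- Fermat-type congruence modulo `P₁`
    obtain ⟨m, hmA⟩ := lemA (M := M) hdvr ha0
    set q := Nat.card (R ⧸ M) with hqdef
    have hq2 : 2 ≤ q := by
      have : Nontrivial (R ⧸ M) := Ideal.Quotient.nontrivial_iff.mpr hM.ne_top
      have := Finite.one_lt_card_iff_nontrivial.mpr this
      omega
    have hfermat : ∀ fT : T, fT ^ q - fT ∈ P₁ := by
      intro fT
      have hg : Polynomial.C ((φ a)⁻¹) *
          (((fT : Polynomial (FractionRing R))) ^ q - (fT : Polynomial (FractionRing R))) ^ m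
          ∈ T := by
        rw [hTmem]
        intro x hx
        have hv : (fT : Polynomial (FractionRing R)).eval x ∈ locSet R M :=
          (hTmem _).mp (SetLike.coe_mem fT) x hx
        obtain ⟨μ, hμ, w1, hw1, hvw⟩ := pow_card_sub_self (M := M) hv
        have hμm : μ ^ m ∈ M ^ m := Ideal.pow_mem_pow hμ m
        have hw1m : w1 ^ m ∈ locSet R M := (locSR M).pow_mem hw1 m
        obtain ⟨w2, hw2, hw2e⟩ := hmA (μ ^ m) hμm (w1 ^ m) hw1m
        have heval : (Polynomial.C ((φ a)⁻¹) *
            (((fT : Polynomial (FractionRing R))) ^ q - (fT : Polynomial (FractionRing R))) ^ m).eval x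
            = (φ a)⁻¹ * (((fT : Polynomial (FractionRing R)).eval x) ^ q -
                (fT : Polynomial (FractionRing R)).eval x) ^ m := by
          simp
        rw [heval, hvw, mul_pow, ← map_pow, hw2e, ← mul_assoc,
          inv_mul_cancel₀ (phi_ne_zero ha0), one_mul]
        exact hw2
      have hga : (⟨Polynomial.C (φ a), hCT hRXT a⟩ : T) * ⟨_, hg⟩ = (fT ^ q - fT) ^ m := by
        apply Subtype.ext
        push_cast
        rw [← mul_assoc, ← Polynomial.C_mul, mul_inv_cancel₀ (phi_ne_zero ha0),
          Polynomial.C_1, one_mul]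
      have hpow : (fT ^ q - fT) ^ m ∈ P₁ := by
        rw [← hga]; exact P₁.mul_mem_right _ hCa
      exact hP₁.mem_of_pow_mem m hpow
    obtain ⟨fT, hfP₂, hfP₁⟩ := SetLike.exists_of_lt h12
    have hqq : q - 1 + 1 = q := by omega
    have h1 : fT * (fT ^ (q - 1) - 1) ∈ P₁ := by
      have := hfermat fT
      rwa [show fT ^ q - fT = fT * (fT ^ (q - 1) - 1) by
        rw [mul_sub, mul_one, ← pow_succ', hqq]] at this
    rcases hP₁.mem_or_mem h1 with h | h
    · exact hfP₁ h
    · have h2 : fT ^ (q - 1) ∈ P₂ := Ideal.pow_mem_of_mem P₂ hfP₂ _ (by omega)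
      have h3 : (1 : T) ∈ P₂ := by
        have := P₂.sub_mem h2 (h12.le h)
        simpa using this
      exact hP₂.ne_top ((Ideal.eq_top_iff_one _).mpr h3)
  -- Step B : the prime `J` of `K[X]` generated by `P₁`, and its generator
  set J : Ideal (Polynomial (FractionRing R)) :=
    Ideal.span (Subtype.val '' (P₁ : Set T)) with hJdef
  have hJprime : J.IsPrime := aux_span_prime hRXT P₁ hP₁ hconstP₁
  obtain ⟨f, hfJ0⟩ := (IsPrincipalIdealRing.principal J).principal
  have hfJ : J = Ideal.span {f} := hfJ0
  have hJbot : J ≠ ⊥ := by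
    obtain ⟨p0, hp0, hp0ne⟩ := SetLike.exists_of_lt h01
    intro hb
    have hmem : (p0 : Polynomial (FractionRing R)) ∈ J := Ideal.subset_span ⟨p0, hp0, rfl⟩
    rw [hb, Ideal.mem_bot] at hmem
    exact hp0ne (by simp [Ideal.mem_bot, ZeroMemClass.coe_eq_zero.mp hmem])
  have hf0 : f ≠ 0 := by
    rintro rfl
    apply hJbot
    rw [hfJ]
    simp
  have hfprime : Prime f := (Ideal.span_singleton_prime hf0).mp
    (by rw [← hfJ]; exact hJprime)
  have hirr : Irreducible f := hfprime.irreducible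
  -- characterization of `P₁`
  have Himg : Subtype.val '' (P₁ : Set T) =
      {g : Polynomial (FractionRing R) | g ∈ T ∧ f ∣ g} := by
    ext g
    constructor
    · rintro ⟨p, hp, rfl⟩
      refine ⟨SetLike.coe_mem p, ?_⟩
      rw [← Ideal.mem_span_singleton, ← hfJ]
      exact Ideal.subset_span ⟨p, hp, rfl⟩
    · rintro ⟨hgT, hdvd⟩
      have hgJ : g ∈ J := by rw [hfJ]; exact Ideal.mem_span_singleton.mpr hdvd
      obtain ⟨e, he, p, hp, hv⟩ := aux_clear hRXT P₁ hgJ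
      have heq : (⟨Polynomial.C (φ e), hCT hRXT e⟩ : T) * ⟨g, hgT⟩ = p :=
        Subtype.ext (by push_cast; rw [hv])
      have hmem : (⟨Polynomial.C (φ e), hCT hRXT e⟩ : T) * ⟨g, hgT⟩ ∈ P₁ := heq ▸ hp
      rcases hP₁.mem_or_mem hmem with hc | hgmem
      · exact absurd hc (hCnotP hRXT P₁ hconstP₁ he)
      · exact ⟨⟨g, hgT⟩, hgmem, rfl⟩
  -- Step C : `P₂` contains a nonzero constant `C (φ a)`
  have hP₂const : ∃ a : R, a ≠ 0 ∧ ∃ pa : T, pa ∈ P₂ ∧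
      (pa : Polynomial (FractionRing R)) = Polynomial.C (φ a) := by
    by_cases hc : ∀ p ∈ P₂, ∀ w : FractionRing R,
        (p : Polynomial (FractionRing R)) = Polynomial.C w → w = 0
    · exfalso
      set J₂ : Ideal (Polynomial (FractionRing R)) :=
        Ideal.span (Subtype.val '' (P₂ : Set T)) with hJ₂def
      have hJ₂prime : J₂.IsPrime := aux_span_prime hRXT P₂ hP₂ hc
      have hle : J ≤ J₂ :=
        Ideal.span_mono (Set.image_mono (fun t ht => h12.le ht))
      have hJmax : J.IsMaximal := by
        haveI := hJprime
        exact IsPrime.to_maximal_ideal hJbot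
      have hJJ₂ : J = J₂ := hJmax.eq_of_le hJ₂prime.ne_top hle
      obtain ⟨fT, hfP₂, hfP₁⟩ := SetLike.exists_of_lt h12
      have : (fT : Polynomial (FractionRing R)) ∈ J₂ := Ideal.subset_span ⟨fT, hfP₂, rfl⟩
      rw [← hJJ₂, hfJ] at this
      have : (fT : Polynomial (FractionRing R)) ∈
          {g : Polynomial (FractionRing R) | g ∈ T ∧ f ∣ g} :=
        ⟨SetLike.coe_mem fT, Ideal.mem_span_singleton.mp this⟩
      rw [← Himg] at this
      obtain ⟨p, hpmem, hpv⟩ := this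
      apply hfP₁
      rw [show fT = p from Subtype.ext hpv.symm]
      exact hpmem
    · push_neg at hc
      obtain ⟨p, hp, w, hpw, hw0⟩ := hc
      have hwmem : w ∈ locSet R M := by
        have := (hTmem (p : Polynomial (FractionRing R))).mp (SetLike.coe_mem p) 0 loc_zero
        rw [hpw] at this; simpa using this
      obtain ⟨a, s, hs, hws⟩ := hwmem
      have hs0 : φ s ≠ 0 := phi_ne_zero (notMem_ne_zero hs)
      have ha0 : a ≠ 0 := by
        intro h
        apply hw0
        rw [hws, h, map_zero, zero_div]
      refine ⟨a, ha0, (⟨Polynomial.C (φ s), hCT hRXT s⟩ : T) * p, P₂.mul_mem_left _ hp, ?_⟩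
      push_cast
      rw [hpw, hws, ← Polynomial.C_mul]
      congr 1
      field_simp
      exact mul_div_cancel_left₀ _ hs0
  obtain ⟨a₂, ha₂0, pa₂, hpa₂, hpa₂v⟩ := hP₂const
  refine ⟨f, hirr, Himg, ?_⟩
  -- Step D : contraction to `T' = Int(R)_M`
  intro T' hT'
  have hT'mem : ∀ g : Polynomial (FractionRing R),
      g ∈ T' ↔ ∃ h ∈ IntPoly R, ∃ s : R, s ∉ M ∧
        g = Polynomial.C (((algebraMap R (FractionRing R)) s)⁻¹) * h := by
    intro g
    constructor
    · intro hg
      have : g ∈ (T' : Set (Polynomial (FractionRing R))) := hg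
      rw [hT'] at this
      exact this
    · intro hg
      have : g ∈ (T' : Set (Polynomial (FractionRing R))) := by rw [hT']; exact hg
      exact this
  have h1M : (1 : R) ∉ M := fun h => hM.ne_top ((Ideal.eq_top_iff_one M).mpr h)
  have hT'T : T' ≤ T := by
    intro g hg
    rw [hT'mem] at hg
    obtain ⟨h, hh, s, hs, rfl⟩ := hg
    rw [hTmem]
    intro x hx
    rw [Polynomial.eval_mul, Polynomial.eval_C]
    have hev : h.eval x ∈ locSet R M := intPoly_eval_mem (M := M) hdvr hh hx
    rw [inv_mul_eq_div]
    exact loc_div hev hs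
  have hRXT' : ∀ q : Polynomial R, q.map φ ∈ T' := by
    intro q
    rw [hT'mem]
    exact ⟨q.map φ, map_mem_IntPoly q, 1, h1M, by simp⟩
  set ι : T' →+* T := Subring.inclusion hT'T with hιdef
  have hιval : ∀ g : T', ((ι g : T) : Polynomial (FractionRing R)) = (g : Polynomial (FractionRing R)) :=
    fun g => rfl
  have hspanPrime : (Ideal.span {f} : Ideal (Polynomial (FractionRing R))).IsPrime :=
    (Ideal.span_singleton_prime hf0).mpr hfprime
  haveI := hspanPrime
  have hbotQ₁ : ⊥ < Ideal.comap (Subring.subtype T') (Ideal.span {f}) := by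
    obtain ⟨d0, q0, hd0, hq0⟩ := exists_poly_denom (R := R) f
    have hg0T' : q0.map φ ∈ T' := hRXT' q0
    have hg0ne : q0.map φ ≠ 0 := by
      rw [hq0]
      exact mul_ne_zero (fun h => phi_ne_zero hd0 (Polynomial.C_eq_zero.mp h)) hf0
    have hg0mem : (⟨q0.map φ, hg0T'⟩ : T') ∈ Ideal.comap (Subring.subtype T') (Ideal.span {f}) := by
      rw [Ideal.mem_comap]
      show (q0.map φ) ∈ Ideal.span {f}
      exact Ideal.mem_span_singleton.mpr ⟨Polynomial.C (φ d0), by rw [hq0]; ring⟩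
    rw [bot_lt_iff_ne_bot]
    intro hb
    rw [hb, Ideal.mem_bot] at hg0mem
    exact hg0ne (by simpa using congrArg Subtype.val hg0mem)
  have hltQ : Ideal.comap (Subring.subtype T') (Ideal.span {f}) < Ideal.comap ι P₂ := by
    have hle : Ideal.comap (Subring.subtype T') (Ideal.span {f}) ≤ Ideal.comap ι P₂ := by
      intro g hg
      rw [Ideal.mem_comap] at hg ⊢
      have hdvd : f ∣ (g : Polynomial (FractionRing R)) := Ideal.mem_span_singleton.mp hg
      have : (g : Polynomial (FractionRing R)) ∈
          {x : Polynomial (FractionRing R) | x ∈ T ∧ f ∣ x} := ⟨hT'T g.2, hdvd⟩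
      rw [← Himg] at this
      obtain ⟨p, hpmem, hpv⟩ := this
      have : ι g = p := Subtype.ext (by rw [hιval]; exact hpv.symm)
      rw [this]
      exact h12.le hpmem
    have hmemQ₂ : (⟨Polynomial.C (φ a₂), hCT hRXT' a₂⟩ : T') ∈ Ideal.comap ι P₂ := by
      rw [Ideal.mem_comap]
      have : ι ⟨Polynomial.C (φ a₂), hCT hRXT' a₂⟩ = pa₂ :=
        Subtype.ext (by rw [hιval]; exact hpa₂v.symm)
      rw [this]
      exact hpa₂
    have hnotQ₁ : (⟨Polynomial.C (φ a₂), hCT hRXT' a₂⟩ : T') ∉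
        Ideal.comap (Subring.subtype T') (Ideal.span {f}) := by
      intro hmem
      rw [Ideal.mem_comap] at hmem
      have hdvd : f ∣ Polynomial.C (φ a₂) := Ideal.mem_span_singleton.mp hmem
      exact hirr.not_isUnit (isUnit_of_dvd_unit hdvd
        (Polynomial.isUnit_C.mpr (isUnit_iff_ne_zero.mpr (phi_ne_zero ha₂0))))
    exact lt_of_le_of_ne hle (fun he => hnotQ₁ (he.symm ▸ hmemQ₂))
  refine ⟨Ideal.comap (Subring.subtype T') (Ideal.span {f}), Ideal.comap ι P₂,
    Ideal.IsPrime.comap (Subring.subtype T'), Ideal.IsPrime.comap ι, hbotQ₁, hltQ, ?_, ?_, ?_⟩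
  · -- image of Q₁
    ext g
    constructor
    · rintro ⟨p, hp, rfl⟩
      exact ⟨SetLike.coe_mem p, Ideal.mem_span_singleton.mp (Ideal.mem_comap.mp hp)⟩
    · rintro ⟨hgT', hdvd⟩
      exact ⟨⟨g, hgT'⟩, Ideal.mem_comap.mpr (Ideal.mem_span_singleton.mpr hdvd), rfl⟩
  · -- image of Q₂
    ext g
    constructor
    · rintro ⟨p, hp, rfl⟩
      refine ⟨SetLike.coe_mem p, ι p, Ideal.mem_comap.mp hp, (hιval p)⟩
    · rintro ⟨hgT', p, hpmem, hpv⟩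
      refine ⟨⟨g, hgT'⟩, Ideal.mem_comap.mpr ?_, rfl⟩
      have : ι ⟨g, hgT'⟩ = p := Subtype.ext (by rw [hιval]; exact hpv.symm)
      rw [this]
      exact hpmem
  · -- Krull dimension
    have hQ₁p : (Ideal.comap (Subring.subtype T') (Ideal.span {f})).IsPrime :=
      Ideal.IsPrime.comap (Subring.subtype T')
    have hQ₂p : (Ideal.comap ι P₂).IsPrime := Ideal.IsPrime.comap ι
    let x0 : PrimeSpectrum T' := ⟨⊥, Ideal.bot_prime⟩
    let x1 : PrimeSpectrum T' := ⟨Ideal.comap (Subring.subtype T') (Ideal.span {f}), hQ₁p⟩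
    let x2 : PrimeSpectrum T' := ⟨Ideal.comap ι P₂, hQ₂p⟩
    have h01' : x0 < x1 := hbotQ₁
    have h12' : x1 < x2 := hltQ
    let c : LTSeries (PrimeSpectrum T') :=
      ((RelSeries.singleton {(a, b) : PrimeSpectrum T' × PrimeSpectrum T' | a < b} x0).snoc x1 (by rw [RelSeries.last_singleton]; exact h01')).snoc
        x2 (by rw [RelSeries.last_snoc]; exact h12')
    have hlen := Order.LTSeries.length_le_krullDim (p := c)
    have hc : c.length = 2 := by simp [c, RelSeries.snoc, RelSeries.append]
    rw [hc] at hlen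
    rw [ringKrullDim]
    exact_mod_cast hlen
end

section
/- In the tower construction, for every n ≥ 2 and every prime ideal q of Dₙ with q ≠ 𝓜ₙ, there exists a unique prime ideal Q of Bₙ with Q ∩ Dₙ = q, and moreover (Dₙ)_q = (Bₙ)_Q. -/
/- Preamble: the tower construction of Fontana–Kabbaj (Example 3.1).
All rings are realized as subsets/subrings of one ambient field `Amb k0 r`:
the rational function field over `k0` in the indeterminates
`X₁, X₂, …` (indexed by `ℕ`), `Y`, and `Z₁, …, Z_{r-1}`. -/

noncomputable section

open Polynomial

/-- Index type for the indeterminates: `Sum.inl n` is `Xₙ`, `Sum.inr (Sum.inl ())` is `Y`,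
and `Sum.inr (Sum.inr i)` is `Z_{i+1}`. -/
abbrev TowerVars (r : ℕ) : Type := ℕ ⊕ (Unit ⊕ Fin (r - 1))

/-- The ambient field: the fraction field of the polynomial ring over `k0` in all the
indeterminates. -/
abbrev Amb (k0 : Type) [Field k0] (r : ℕ) : Type :=
  FractionRing (MvPolynomial (TowerVars r) k0)

variable (k0 : Type) [Field k0] (r : ℕ)

/-- The indeterminate `Xₙ` as an element of the ambient field. -/
def ambX (n : ℕ) : Amb k0 r :=
  algebraMap (MvPolynomial (TowerVars r) k0) (Amb k0 r) (MvPolynomial.X (Sum.inl n))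

/-- The indeterminate `Y` as an element of the ambient field. -/
def ambY : Amb k0 r :=
  algebraMap (MvPolynomial (TowerVars r) k0) (Amb k0 r) (MvPolynomial.X (Sum.inr (Sum.inl ())))

/-- The indeterminates `Z₁, …, Z_{r-1}` as elements of the ambient field. -/
def ambZ (i : Fin (r - 1)) : Amb k0 r :=
  algebraMap (MvPolynomial (TowerVars r) k0) (Amb k0 r) (MvPolynomial.X (Sum.inr (Sum.inr i)))

/-- The image of the base field `k0` in the ambient field. -/
def baseSet : Set (Amb k0 r) :=
  Set.range fun c : k0 => algebraMap (MvPolynomial (TowerVars r) k0) (Amb k0 r) (MvPolynomial.C c)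

/-- `kₙ := k0(X₁, …, Xₙ)` as a subfield of the ambient field. -/
def kfld (n : ℕ) : Subfield (Amb k0 r) :=
  Subfield.closure (baseSet k0 r ∪ {x | ∃ i, 1 ≤ i ∧ i ≤ n ∧ x = ambX k0 r i})

/-- `Fₙ := kₙ(Z₁, …, Z_{r-1})`. -/
def Ffld (n : ℕ) : Subfield (Amb k0 r) :=
  Subfield.closure (↑(kfld k0 r n) ∪ Set.range (ambZ k0 r))

/-- `Kₙ := Fₙ(Y)`. -/
def Kfld (n : ℕ) : Subfield (Amb k0 r) :=
  Subfield.closure (↑(Ffld k0 r n) ∪ {ambY k0 r})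

/-- The polynomial ring `Fₙ[Y]` as a subring of the ambient field. -/
def polyRing (n : ℕ) : Subring (Amb k0 r) :=
  Subring.closure (↑(Ffld k0 r n) ∪ {ambY k0 r})

/-- `Vₙ := Fₙ[Y]_{(Y)}`, the localization of `Fₙ[Y]` at the prime `(Y)`, as a subset of
the ambient field. -/
def Vset (n : ℕ) : Set (Amb k0 r) :=
  {x | ∃ f ∈ polyRing k0 r n, ∃ g ∈ polyRing k0 r n,
    (¬ ∃ h ∈ polyRing k0 r n, g = ambY k0 r * h) ∧ x = f / g}

/-- `Mₙ := Y·Fₙ[Y]_{(Y)}`, the maximal ideal of `Vₙ`. -/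
def Mset (n : ℕ) : Set (Amb k0 r) :=
  {x | ∃ v ∈ Vset k0 r n, x = ambY k0 r * v}

/-- `Aₙ := kₙ + Mₙ`. -/
def Aset (n : ℕ) : Set (Amb k0 r) :=
  {x | ∃ c ∈ kfld k0 r n, ∃ m ∈ Mset k0 r n, x = c + m}

/-- `k := ⋃ₙ kₙ` as a subset of the ambient field. -/
def kfldU : Set (Amb k0 r) := ⋃ n, (kfld k0 r n : Set (Amb k0 r))

/-- `F := k(Z₁, …, Z_{r-1}) = ⋃ₙ Fₙ`. -/
def FfldU : Subfield (Amb k0 r) :=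
  Subfield.closure (kfldU k0 r ∪ Set.range (ambZ k0 r))

/-- `K := F(Y) = ⋃ₙ Kₙ`. -/
def KfldU : Subfield (Amb k0 r) :=
  Subfield.closure (↑(FfldU k0 r) ∪ {ambY k0 r})

/-- The polynomial ring `F[Y]`. -/
def polyRingU : Subring (Amb k0 r) :=
  Subring.closure (↑(FfldU k0 r) ∪ {ambY k0 r})

/-- `V := F[Y]_{(Y)}`. -/
def VsetU : Set (Amb k0 r) :=
  {x | ∃ f ∈ polyRingU k0 r, ∃ g ∈ polyRingU k0 r,
    (¬ ∃ h ∈ polyRingU k0 r, g = ambY k0 r * h) ∧ x = f / g}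

/-- `M := Y·F[Y]_{(Y)} = ⋃ₙ Mₙ`. -/
def MsetU : Set (Amb k0 r) :=
  {x | ∃ v ∈ VsetU k0 r, x = ambY k0 r * v}

/-- `A := k + M = ⋃ₙ Aₙ`. -/
def AsetU : Set (Amb k0 r) :=
  {x | ∃ c ∈ kfldU k0 r, ∃ m ∈ MsetU k0 r, x = c + m}

/-- `X′ₙ := (1 + Y·Xₙ)/Y`. -/
def ambX' (n : ℕ) : Amb k0 r :=
  (1 + ambY k0 r * ambX k0 r n) / ambY k0 r

/-- `1` belongs to the ideal of `W` generated by the coefficients of `g`, where `W` is a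
subring (given as a subset `S`) of the ambient field. -/
def unitContent (S : Set (Amb k0 r)) (g : Polynomial (Amb k0 r)) : Prop :=
  ∃ (t : Finset ℕ) (u : ℕ → Amb k0 r), (∀ i ∈ t, u i ∈ S) ∧ ∑ i ∈ t, u i * g.coeff i = 1

/-- The Nagata ring `W(T)` of a subring `W ⊆ Amb k0 r` (given as a subset `S`) in the
"variable" `T`: all fractions `f(T)/g(T)` with `f, g ∈ W[T]` and the coefficients of `g`
generating the unit ideal of `W`.  (When `T` is transcendental over `W` this is the usual
Nagata ring.) -/
def nagataSet (S : Set (Amb k0 r)) (T : Amb k0 r) : Set (Amb k0 r) :=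
  {x | ∃ f g : Polynomial (Amb k0 r), (∀ i, f.coeff i ∈ S) ∧ (∀ i, g.coeff i ∈ S) ∧
    unitContent k0 r S g ∧ x = f.eval T / g.eval T}

/-- The valuation overrings of a ring `D` (given as a subset) inside a subfield `L` of the
ambient field: subrings `W` with `D ⊆ W ⊆ L` such that for every `x ∈ L`, `x ∈ W` or
`x⁻¹ ∈ W`. -/
def valOverringsIn (D : Set (Amb k0 r)) (L : Subfield (Amb k0 r)) : Set (Subring (Amb k0 r)) :=
  {W | D ⊆ ↑W ∧ (W : Set (Amb k0 r)) ⊆ (L : Set (Amb k0 r)) ∧ ∀ x ∈ L, x ∈ W ∨ x⁻¹ ∈ W}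

/-- The Kronecker function ring `Kr_{L(T)}(D, b) = ⋂ {W(T) : W a valuation overring of `D`
in `L`}`, realized as a subset of the ambient field. -/
def krSet (D : Set (Amb k0 r)) (L : Subfield (Amb k0 r)) (T : Amb k0 r) : Set (Amb k0 r) :=
  ⋂ W ∈ valOverringsIn k0 r D L, nagataSet k0 r (↑W) T

/-- The tower `Dₙ`: `D₁ := A₁` and `Dₙ := Bₙ ∩ Aₙ` for `n ≥ 2`, where
`Bₙ := Kr_{K_{n-1}(X′ₙ)}(D_{n-1}, b)`.  (The value at `0` is junk, set to `D₁`.) -/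
def Dset : ℕ → Set (Amb k0 r)
  | 0 => Aset k0 r 1
  | 1 => Aset k0 r 1
  | n + 2 => krSet k0 r (Dset (n + 1)) (Kfld k0 r (n + 1)) (ambX' k0 r (n + 2)) ∩ Aset k0 r (n + 2)

/-- `Bₙ := Kr_{K_{n-1}(X′ₙ)}(D_{n-1}, b)` (meaningful for `n ≥ 2`). -/
def Bset (n : ℕ) : Set (Amb k0 r) :=
  krSet k0 r (Dset k0 r (n - 1)) (Kfld k0 r (n - 1)) (ambX' k0 r n)

/-- `𝓜ₙ := Mₙ ∩ Dₙ`. -/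
def MMset (n : ℕ) : Set (Amb k0 r) := Mset k0 r n ∩ Dset k0 r n

/-- `D := ⋃__{n ≥ 1} Dₙ`. -/
def DsetU : Set (Amb k0 r) := ⋃ n, Dset k0 r n

/-- `𝓜 := ⋃_{n ≥ 2} 𝓜ₙ`. -/
def MMsetU : Set (Amb k0 r) := ⋃ n, MMset k0 r (n + 2)

/-- The localization `D_m = {a/b : a, b ∈ D, b ∉ m}` of a subring `D` of the ambient
field (given as a subset) at (the complement of) a subset `m`. -/
def locAt (D m : Set (Amb k0 r)) : Set (Amb k0 r) :=
  {x | ∃ a ∈ D, ∃ b ∈ D, b ∉ m ∧ x = a / b}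

/-- The quotient field, inside the ambient field, of a subring given as a subset. -/
def qfSet (D : Set (Amb k0 r)) : Set (Amb k0 r) :=
  {x | ∃ a ∈ D, ∃ b ∈ D, b ≠ 0 ∧ x = a / b}

/-- The nonunits of a subring of the ambient field, given as a subset: in a local
subring of a field these form the maximal ideal. -/
def nonunitsIn (S : Set (Amb k0 r)) : Set (Amb k0 r) :=
  {x | x ∈ S ∧ (x = 0 ∨ x⁻¹ ∉ S)}

/-- A subring `A` of the ambient field is a pseudo-valuation domain: it is local, and its
maximal ideal (= set of nonunits) is also the maximal ideal of some valuation overring of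
`A` in its quotient field. -/
def IsPVDSub (A : Subring (Amb k0 r)) : Prop :=
  IsLocalRing ↥A ∧
  ∃ W : Subring (Amb k0 r), (A : Set (Amb k0 r)) ⊆ ↑W ∧
    (W : Set (Amb k0 r)) ⊆ qfSet k0 r ↑A ∧
    (∀ x ∈ qfSet k0 r (A : Set (Amb k0 r)), x ∈ W ∨ x⁻¹ ∈ W) ∧
    nonunitsIn k0 r ↑A = nonunitsIn k0 r ↑W

/-- The valuative dimension of a subring of the ambient field: the supremum of the Krull
dimensions of its valuation overrings (in its quotient field). -/
def subValuativeDim (A : Subring (Amb k0 r)) : WithBot ℕ∞ :=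
  ⨆ W : {W : Subring (Amb k0 r) // (A : Set (Amb k0 r)) ⊆ ↑W ∧
      (W : Set (Amb k0 r)) ⊆ qfSet k0 r ↑A ∧
      ∀ x ∈ qfSet k0 r (A : Set (Amb k0 r)), x ∈ W ∨ x⁻¹ ∈ W},
    ringKrullDim ↥(W : Subring (Amb k0 r))


/-- `1` belongs to the ideal generated by the coefficients of a multivariable polynomial
`g` in the subring given by the subset `S`. -/
def mvUnitContent (S : Set (Amb k0 r)) (g : MvPolynomial ℕ (Amb k0 r)) : Prop :=
  ∃ (t : Finset (ℕ →₀ ℕ)) (u : (ℕ →₀ ℕ) → Amb k0 r),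
    (∀ m ∈ t, u m ∈ S) ∧ ∑ m ∈ t, u m * MvPolynomial.coeff m g = 1

/-- The Nagata ring `W(T₀, T₁, …)` of a subring `W` of the ambient field (given as a
subset `S`) in countably many "variables" `T j`: all fractions `f(T)/g(T)` with
`f, g ∈ W[T₀, T₁, …]` and the coefficients of `g` generating the unit ideal of `W`. -/
def nagataSetMv (S : Set (Amb k0 r)) (T : ℕ → Amb k0 r) : Set (Amb k0 r) :=
  {x | ∃ f g : MvPolynomial ℕ (Amb k0 r),
    (∀ m, MvPolynomial.coeff m f ∈ S) ∧ (∀ m, MvPolynomial.coeff m g ∈ S) ∧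
    mvUnitContent k0 r S g ∧ x = MvPolynomial.eval T f / MvPolynomial.eval T g}

/-- A subring `S` of the ambient field is an *essential* domain: `S` is the intersection
of a family of localizations `S_p` at primes `p ∈ Δ`, each of which is a valuation domain
(with quotient field the quotient field of `S`). -/
def IsEssentialSub (S : Subring (Amb k0 r)) : Prop :=
  ∃ Δ : Set (Ideal ↥S),
    (∀ p ∈ Δ, p.IsPrime) ∧
    (∀ p ∈ Δ, ∀ x ∈ qfSet k0 r (S : Set (Amb k0 r)),
      x ∈ locAt k0 r ↑S (Subtype.val '' (p : Set ↥S)) ∨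
      x⁻¹ ∈ locAt k0 r ↑S (Subtype.val '' (p : Set ↥S))) ∧
    (S : Set (Amb k0 r)) = ⋂ p ∈ Δ, locAt k0 r ↑S (Subtype.val '' (p : Set ↥S))

end
noncomputable section FKHelpers

open Polynomial

namespace FKtower

variable (k0 : Type) [Field k0] (r : ℕ)

/-- The index of the variable `Y`. -/
def yIdx : TowerVars r := Sum.inr (Sum.inl ())

/-- The canonical map from the polynomial ring to the ambient field. -/
def phi : MvPolynomial (TowerVars r) k0 →+* Amb k0 r :=
  algebraMap (MvPolynomial (TowerVars r) k0) (Amb k0 r)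

lemma phi_injective : Function.Injective (phi k0 r) :=
  IsFractionRing.injective (MvPolynomial (TowerVars r) k0) (Amb k0 r)

/-- Index type of all variables except `Y`. -/
abbrev NYVars := {v : TowerVars r // v ≠ yIdx r}

/-- The canonical map from polynomials in the non-`Y` variables to the ambient field. -/
def rho : MvPolynomial (NYVars r) k0 →+* Amb k0 r :=
  (phi k0 r).comp (MvPolynomial.rename (Subtype.val : NYVars r → TowerVars r)).toRingHom

/-- The subring of `Y`-free polynomials. -/
def Rng : Subring (Amb k0 r) := (rho k0 r).range

/-- The subfield of `Y`-free rational functions. -/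
def EY : Subfield (Amb k0 r) := Subfield.closure ↑(Rng k0 r)

lemma mem_EY_iff {x : Amb k0 r} :
    x ∈ EY k0 r ↔ ∃ a ∈ Rng k0 r, ∃ b ∈ Rng k0 r, a / b = x := by
  rw [EY, Subfield.mem_closure_iff, Subring.closure_eq]

lemma baseSet_subset_EY : baseSet k0 r ⊆ ↑(EY k0 r) := by
  rintro x ⟨c, rfl⟩
  apply Subfield.subset_closure
  exact ⟨MvPolynomial.C c, by simp [rho, phi, MvPolynomial.rename_C]⟩

lemma ambX_mem_EY (n : ℕ) : ambX k0 r n ∈ EY k0 r := by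
  apply Subfield.subset_closure
  refine ⟨MvPolynomial.X ⟨Sum.inl n, by simp [yIdx]⟩, ?_⟩
  simp [rho, phi, MvPolynomial.rename_X, ambX]

lemma ambZ_mem_EY (i : Fin (r-1)) : ambZ k0 r i ∈ EY k0 r := by
  apply Subfield.subset_closure
  refine ⟨MvPolynomial.X ⟨Sum.inr (Sum.inr i), by simp [yIdx]⟩, ?_⟩
  simp [rho, phi, MvPolynomial.rename_X, ambZ]

lemma kfld_le_EY (n : ℕ) : kfld k0 r n ≤ EY k0 r := by
  rw [kfld, Subfield.closure_le]
  rintro x (hx | ⟨i, -, -, rfl⟩)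
  · exact baseSet_subset_EY k0 r hx
  · exact ambX_mem_EY k0 r i

lemma Ffld_le_EY (n : ℕ) : Ffld k0 r n ≤ EY k0 r := by
  rw [Ffld, Subfield.closure_le]
  rintro x (hx | ⟨i, rfl⟩)
  · exact kfld_le_EY k0 r n hx
  · exact ambZ_mem_EY k0 r i

/-- The equivalence shifting out the `Y`-variable. -/
def psi : MvPolynomial (TowerVars r) k0 ≃+* Polynomial (MvPolynomial (NYVars r) k0) :=
  ((MvPolynomial.renameEquiv k0 (Equiv.optionSubtypeNe (yIdx r)).symm).trans
    (MvPolynomial.optionEquivLeft k0 (NYVars r))).toRingEquiv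

lemma psi_X_y : psi k0 r (MvPolynomial.X (yIdx r)) = Polynomial.X := by
  simp only [psi, AlgEquiv.toRingEquiv_eq_coe, AlgEquiv.coe_ringEquiv, AlgEquiv.trans_apply,
    MvPolynomial.renameEquiv_apply, MvPolynomial.rename_X, Equiv.optionSubtypeNe_symm_self,
    MvPolynomial.optionEquivLeft_X_none]

lemma psi_rename (P : MvPolynomial (NYVars r) k0) :
    psi k0 r (MvPolynomial.rename Subtype.val P) = Polynomial.C P := by
  simp only [psi, AlgEquiv.toRingEquiv_eq_coe, AlgEquiv.coe_ringEquiv, AlgEquiv.trans_apply,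
    MvPolynomial.renameEquiv_apply, MvPolynomial.rename_rename]
  have h1 : ((Equiv.optionSubtypeNe (yIdx r)).symm ∘ Subtype.val : NYVars r → _) = some := by
    funext b
    rw [Function.comp_apply, Equiv.optionSubtypeNe_symm_of_ne b.2]
  rw [h1]
  induction P using MvPolynomial.induction_on with
  | C a => rw [MvPolynomial.rename_C, MvPolynomial.optionEquivLeft_C]
  | add p q hp hq => rw [map_add, map_add, hp, hq, map_add]
  | mul_X p b hp =>
      rw [map_mul, map_mul, hp, MvPolynomial.rename_X, MvPolynomial.optionEquivLeft_X_some,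
        map_mul]

/-- Key transcendence lemma: `Y` is transcendental over the `Y`-free rational functions. -/
theorem transY (p : Polynomial (Amb k0 r)) (hc : ∀ i, p.coeff i ∈ EY k0 r)
    (hz : p.eval (ambY k0 r) = 0) : p = 0 := by
  classical
  -- denominators
  have hden : ∀ i : ℕ, ∃ b, b ∈ Rng k0 r ∧ b ≠ 0 ∧ b * p.coeff i ∈ Rng k0 r := by
    intro i
    rcases (mem_EY_iff k0 r).1 (hc i) with ⟨a, ha, b, hb, hab⟩
    by_cases h0 : p.coeff i = 0
    · exact ⟨1, Subring.one_mem _, one_ne_zero, by rw [h0, mul_zero]; exact Subring.zero_mem _⟩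
    · have hbne : b ≠ 0 := by rintro rfl; rw [div_zero] at hab; exact h0 hab.symm
      refine ⟨b, hb, hbne, ?_⟩
      have : b * p.coeff i = a := by rw [← hab]; field_simp
      rwa [this]
  choose z hz1 hz2 hz3 using hden
  set s : Finset ℕ := Finset.range (p.natDegree + 1) with hs
  set Z : Amb k0 r := ∏ i ∈ s, z i with hZ
  have hZmem : Z ∈ Rng k0 r := Subring.prod_mem _ (fun i _ => hz1 i)
  have hZne : Z ≠ 0 := Finset.prod_ne_zero_iff.2 (fun i _ => hz2 i)
  have hcoef : ∀ i ∈ s, Z * p.coeff i ∈ Rng k0 r := by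
    intro i hi
    rw [hZ, ← Finset.mul_prod_erase s z hi, mul_comm (z i) _, mul_assoc]
    exact Subring.mul_mem _ (Subring.prod_mem _ (fun j _ => hz1 j)) (hz3 i)
  have hall : ∀ i : ℕ, ∃ Q : MvPolynomial (NYVars r) k0, rho k0 r Q = Z * p.coeff i := by
    intro i
    by_cases hi : i ∈ s
    · exact hcoef i hi
    · have : p.coeff i = 0 := by
        apply Polynomial.coeff_eq_zero_of_natDegree_lt
        simp only [hs, Finset.mem_range, not_lt] at hi; omega
      exact ⟨0, by rw [this, mul_zero, map_zero]⟩
  choose Q hQ using hall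
  -- the global polynomial identity
  set S : MvPolynomial (TowerVars r) k0 :=
    ∑ i ∈ s, MvPolynomial.rename Subtype.val (Q i) * (MvPolynomial.X (yIdx r)) ^ i with hS
  have hphiS : phi k0 r S = 0 := by
    have he : p.eval (ambY k0 r) = ∑ i ∈ s, p.coeff i * (ambY k0 r) ^ i := by
      rw [Polynomial.eval_eq_sum_range]
    have hYamb : phi k0 r (MvPolynomial.X (yIdx r)) = ambY k0 r := rfl
    rw [hS, map_sum]
    have : ∀ i ∈ s, phi k0 r (MvPolynomial.rename Subtype.val (Q i) *
        (MvPolynomial.X (yIdx r)) ^ i) = (Z * p.coeff i) * (ambY k0 r) ^ i := by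
      intro i _
      rw [map_mul, map_pow, hYamb]
      congr 1
      exact hQ i
    rw [Finset.sum_congr rfl this]
    have : ∑ i ∈ s, Z * p.coeff i * ambY k0 r ^ i = Z * ∑ i ∈ s, p.coeff i * ambY k0 r ^ i := by
      rw [Finset.mul_sum]; apply Finset.sum_congr rfl; intro i _; ring
    rw [this, ← he, hz, mul_zero]
  have hS0 : S = 0 := phi_injective k0 r (by rw [hphiS, map_zero])
  -- apply psi
  have hpsiS : (0 : Polynomial (MvPolynomial (NYVars r) k0)) =
      ∑ i ∈ s, Polynomial.C (Q i) * Polynomial.X ^ i := by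
    have := congrArg (psi k0 r) hS0
    rw [map_zero, hS, map_sum] at this
    rw [← this]
    apply Finset.sum_congr rfl
    intro i _
    rw [map_mul, map_pow, psi_X_y, psi_rename]
  have hQ0 : ∀ j ∈ s, Q j = 0 := by
    intro j hj
    have := congrArg (fun q => Polynomial.coeff q j) hpsiS
    simp only [Polynomial.coeff_zero, Polynomial.finset_sum_coeff] at this
    rw [Finset.sum_congr rfl (fun i _ => by
      rw [Polynomial.C_mul_X_pow_eq_monomial, Polynomial.coeff_monomial])] at this
    rw [Finset.sum_ite_eq' s j Q] at this
    simp only [hj, if_true] at this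
    exact this.symm
  -- conclude
  ext j
  rw [Polynomial.coeff_zero]
  by_cases hj : j ∈ s
  · have := hQ j
    rw [hQ0 j hj, map_zero] at this
    rcases mul_eq_zero.1 this.symm with h | h
    · exact absurd h hZne
    · exact h
  · apply Polynomial.coeff_eq_zero_of_natDegree_lt
    simp only [hs, Finset.mem_range, not_lt] at hj; omega

end FKtower
namespace FKtower

variable (k0 : Type) [Field k0] (r : ℕ)

lemma ambY_ne : ambY k0 r ≠ 0 := by
  intro h
  have h2 := phi_injective k0 r (a₁ := MvPolynomial.X (yIdx r)) (a₂ := 0)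
  simp only [map_zero] at h2
  exact MvPolynomial.X_ne_zero _ (h2 h)

/-- coefficients of a polynomial lie in a subset -/
def CoeffsIn (S : Set (Amb k0 r)) (p : Polynomial (Amb k0 r)) : Prop :=
  ∀ i, p.coeff i ∈ S

variable {k0 r}

namespace CoeffsIn

variable {W : Subring (Amb k0 r)} {p q : Polynomial (Amb k0 r)}

lemma C {x : Amb k0 r} (hx : x ∈ W) : CoeffsIn k0 r ↑W (Polynomial.C x) := by
  intro i
  rw [Polynomial.coeff_C]
  split
  · exact hx
  · exact Subring.zero_mem _

lemma X : CoeffsIn k0 r (↑W) (Polynomial.X) := by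
  intro i
  rw [Polynomial.coeff_X]
  split
  · exact Subring.one_mem _
  · exact Subring.zero_mem _

lemma zero : CoeffsIn k0 r (↑W) 0 := fun i => by
  rw [Polynomial.coeff_zero]; exact Subring.zero_mem _

lemma one : CoeffsIn k0 r (↑W) 1 := by rw [← Polynomial.C_1]; exact C (Subring.one_mem W)

lemma add (hp : CoeffsIn k0 r ↑W p) (hq : CoeffsIn k0 r ↑W q) : CoeffsIn k0 r ↑W (p + q) :=
  fun i => by rw [Polynomial.coeff_add]; exact Subring.add_mem _ (hp i) (hq i)

lemma neg (hp : CoeffsIn k0 r ↑W p) : CoeffsIn k0 r ↑W (-p) :=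
  fun i => by rw [Polynomial.coeff_neg]; exact Subring.neg_mem _ (hp i)

lemma sub (hp : CoeffsIn k0 r ↑W p) (hq : CoeffsIn k0 r ↑W q) : CoeffsIn k0 r ↑W (p - q) := by
  rw [sub_eq_add_neg]; exact hp.add hq.neg

lemma mul (hp : CoeffsIn k0 r ↑W p) (hq : CoeffsIn k0 r ↑W q) : CoeffsIn k0 r ↑W (p * q) := by
  intro i
  rw [Polynomial.coeff_mul]
  exact Subring.sum_mem _ (fun c _ => Subring.mul_mem _ (hp c.1) (hq c.2))

lemma pow (hp : CoeffsIn k0 r ↑W p) (m : ℕ) : CoeffsIn k0 r ↑W (p ^ m) := by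
  induction m with
  | zero => rw [pow_zero]; exact one
  | succ m ih => rw [pow_succ]; exact ih.mul hp

lemma sum {ι : Type*} (s : Finset ι) (f : ι → Polynomial (Amb k0 r))
    (h : ∀ j ∈ s, CoeffsIn k0 r ↑W (f j)) : CoeffsIn k0 r ↑W (∑ j ∈ s, f j) := by
  intro i
  rw [Polynomial.finset_sum_coeff]
  exact Subring.sum_mem _ (fun j hj => h j hj i)

end CoeffsIn

/-- evaluation of a polynomial with coefficients in a subfield at a point of the subfield -/
lemma eval_mem_subfield {F : Subfield (Amb k0 r)} {p : Polynomial (Amb k0 r)}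
    (hp : ∀ i, p.coeff i ∈ F) {x : Amb k0 r} (hx : x ∈ F) : p.eval x ∈ F := by
  rw [Polynomial.eval_eq_sum_range]
  exact Subfield.sum_mem _ (fun i _ => Subfield.mul_mem _ (hp i) (Subfield.pow_mem _ hx i))

lemma coeff_C_mem_subfield {F : Subfield (Amb k0 r)} {x : Amb k0 r} (hx : x ∈ F) :
    ∀ i, (Polynomial.C x).coeff i ∈ F := by
  intro i
  rw [Polynomial.coeff_C]
  split
  · exact hx
  · exact Subfield.zero_mem _

lemma coeff_one_mem_subfield (F : Subfield (Amb k0 r)) :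
    ∀ i, (1 : Polynomial (Amb k0 r)).coeff i ∈ F := by
  rw [← Polynomial.C_1]
  exact coeff_C_mem_subfield (Subfield.one_mem F)

lemma coeff_X_mem_subfield (F : Subfield (Amb k0 r)) :
    ∀ i, (Polynomial.X : Polynomial (Amb k0 r)).coeff i ∈ F := by
  intro i
  rw [Polynomial.coeff_X]
  split
  · exact Subfield.one_mem _
  · exact Subfield.zero_mem _

lemma coeff_X_mul_mem_subfield {F : Subfield (Amb k0 r)} {p : Polynomial (Amb k0 r)}
    (hp : ∀ i, p.coeff i ∈ F) : ∀ i, (Polynomial.X * p).coeff i ∈ F := by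
  intro i
  cases i with
  | zero =>
      rw [Polynomial.mul_coeff_zero, Polynomial.coeff_X_zero, zero_mul]
      exact Subfield.zero_mem _
  | succ i => rw [Polynomial.coeff_X_mul]; exact hp i

lemma coeff_X_mul_zero (p : Polynomial (Amb k0 r)) : (Polynomial.X * p).coeff 0 = 0 := by
  rw [Polynomial.mul_coeff_zero, Polynomial.coeff_X_zero, zero_mul]

variable (k0 r)

/-- nice representation of elements of `polyRing`. -/
lemma mem_polyRing_iff (n : ℕ) {x : Amb k0 r} :
    x ∈ polyRing k0 r n ↔
      ∃ p : Polynomial (Amb k0 r), (∀ i, p.coeff i ∈ Ffld k0 r n) ∧ x = p.eval (ambY k0 r) := by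
  constructor
  · intro hx
    let SR : Subring (Amb k0 r) :=
      { carrier := {x | ∃ p : Polynomial (Amb k0 r),
          (∀ i, p.coeff i ∈ Ffld k0 r n) ∧ x = p.eval (ambY k0 r)},
        one_mem' := ⟨1, coeff_one_mem_subfield _, by simp⟩,
        zero_mem' := ⟨0, fun i => by rw [Polynomial.coeff_zero]; exact Subfield.zero_mem _, by simp⟩,
        add_mem' := by
          rintro a b ⟨p, hp, rfl⟩ ⟨q, hq, rfl⟩
          exact ⟨p + q, fun i => by
            rw [Polynomial.coeff_add]; exact Subfield.add_mem _ (hp i) (hq i), by simp⟩,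
        neg_mem' := by
          rintro a ⟨p, hp, rfl⟩
          exact ⟨-p, fun i => by
            rw [Polynomial.coeff_neg]; exact Subfield.neg_mem _ (hp i), by simp⟩,
        mul_mem' := by
          rintro a b ⟨p, hp, rfl⟩ ⟨q, hq, rfl⟩
          exact ⟨p * q, fun i => by
            rw [Polynomial.coeff_mul]
            exact Subfield.sum_mem _ (fun c _ => Subfield.mul_mem _ (hp c.1) (hq c.2)),
            by simp⟩ }
    have hle : polyRing k0 r n ≤ SR := by
      rw [polyRing, Subring.closure_le]
      rintro y (hy | hy)
      · exact ⟨Polynomial.C y, coeff_C_mem_subfield hy, by simp⟩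
      · rw [Set.mem_singleton_iff] at hy
        exact ⟨Polynomial.X, coeff_X_mem_subfield _, by simp [hy]⟩
    exact hle hx
  · rintro ⟨p, hp, rfl⟩
    rw [Polynomial.eval_eq_sum_range]
    apply Subring.sum_mem
    intro i _
    apply Subring.mul_mem
    · exact Subring.subset_closure (Or.inl (hp i))
    · have hY : ambY k0 r ∈ polyRing k0 r n := Subring.subset_closure (Or.inr rfl)
      exact Subring.pow_mem _ hY i

/-- a "good denominator": value of a polynomial over `Fₙ` with nonzero constant term. -/
def GoodDen (n : ℕ) (g : Amb k0 r) : Prop :=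
  ∃ p : Polynomial (Amb k0 r), (∀ i, p.coeff i ∈ Ffld k0 r n) ∧ g = p.eval (ambY k0 r) ∧
    p.coeff 0 ≠ 0

lemma transEval (n : ℕ) {p : Polynomial (Amb k0 r)} (hp : ∀ i, p.coeff i ∈ Ffld k0 r n)
    (h : p.eval (ambY k0 r) = 0) : p = 0 :=
  transY k0 r p (fun i => Ffld_le_EY k0 r n (hp i)) h

lemma GoodDen.ne_zero {n : ℕ} {g : Amb k0 r} (h : GoodDen k0 r n g) : g ≠ 0 := by
  rcases h with ⟨p, hp, rfl, h0⟩
  intro h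
  exact h0 (by rw [transEval k0 r n hp h, Polynomial.coeff_zero])

lemma GoodDen.mem {n : ℕ} {g : Amb k0 r} (h : GoodDen k0 r n g) : g ∈ polyRing k0 r n := by
  rcases h with ⟨p, hp, rfl, -⟩
  exact (mem_polyRing_iff k0 r n).2 ⟨p, hp, rfl⟩

lemma GoodDen.not_dvd {n : ℕ} {g : Amb k0 r} (h : GoodDen k0 r n g) :
    ¬∃ h' ∈ polyRing k0 r n, g = ambY k0 r * h' := by
  rcases h with ⟨p, hp, rfl, h0⟩
  rintro ⟨h', hh', heq⟩
  rcases (mem_polyRing_iff k0 r n).1 hh' with ⟨q, hq, rfl⟩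
  have hev : (p - Polynomial.X * q).eval (ambY k0 r) = 0 := by
    rw [Polynomial.eval_sub, Polynomial.eval_mul, Polynomial.eval_X, ← heq, sub_self]
  have hco : ∀ i, (p - Polynomial.X * q).coeff i ∈ Ffld k0 r n := by
    intro i
    rw [Polynomial.coeff_sub]
    exact Subfield.sub_mem _ (hp i) (coeff_X_mul_mem_subfield hq i)
  have hps := sub_eq_zero.1 (transEval k0 r n hco hev)
  rw [hps, coeff_X_mul_zero] at h0
  exact h0 rfl

lemma goodDen_of_nondvd {n : ℕ} {g : Amb k0 r} (hg : g ∈ polyRing k0 r n)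
    (h : ¬∃ h' ∈ polyRing k0 r n, g = ambY k0 r * h') : GoodDen k0 r n g := by
  rcases (mem_polyRing_iff k0 r n).1 hg with ⟨p, hp, rfl⟩
  by_cases h0 : p.coeff 0 = 0
  · exfalso
    apply h
    refine ⟨p.divX.eval (ambY k0 r), (mem_polyRing_iff k0 r n).2 ⟨p.divX, fun i => by
      rw [Polynomial.coeff_divX]; exact hp _, rfl⟩, ?_⟩
    conv_lhs => rw [← Polynomial.X_mul_divX_add p]
    rw [h0]
    simp
  · exact ⟨p, hp, rfl, h0⟩

/-- clean characterization of `Vset`. -/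
lemma mem_Vset_iff (n : ℕ) {x : Amb k0 r} :
    x ∈ Vset k0 r n ↔ ∃ f ∈ polyRing k0 r n, ∃ g, GoodDen k0 r n g ∧ x = f / g := by
  constructor
  · rintro ⟨f, hf, g, hg, hnd, rfl⟩
    exact ⟨f, hf, g, goodDen_of_nondvd k0 r hg hnd, rfl⟩
  · rintro ⟨f, hf, g, hg, rfl⟩
    exact ⟨f, hf, g, hg.mem, hg.not_dvd, rfl⟩

lemma goodDen_one (n : ℕ) : GoodDen k0 r n 1 :=
  ⟨1, coeff_one_mem_subfield _, by simp, by simp⟩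

lemma polyRing_subset_V (n : ℕ) {x : Amb k0 r} (hx : x ∈ polyRing k0 r n) :
    x ∈ Vset k0 r n := by
  rw [mem_Vset_iff]
  exact ⟨x, hx, 1, goodDen_one k0 r n, by simp⟩

lemma zero_mem_V (n : ℕ) : (0 : Amb k0 r) ∈ Vset k0 r n :=
  polyRing_subset_V k0 r n (Subring.zero_mem _)

lemma one_mem_V (n : ℕ) : (1 : Amb k0 r) ∈ Vset k0 r n :=
  polyRing_subset_V k0 r n (Subring.one_mem _)

lemma Ffld_subset_polyRing (n : ℕ) {x : Amb k0 r} (hx : x ∈ Ffld k0 r n) :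
    x ∈ polyRing k0 r n := Subring.subset_closure (Or.inl hx)

lemma Y_mem_polyRing (n : ℕ) : ambY k0 r ∈ polyRing k0 r n :=
  Subring.subset_closure (Or.inr rfl)

lemma kfld_le_Ffld (n : ℕ) : kfld k0 r n ≤ Ffld k0 r n := by
  intro x hx
  exact Subfield.subset_closure (Or.inl hx)

lemma Ffld_subset_V (n : ℕ) {x : Amb k0 r} (hx : x ∈ Ffld k0 r n) : x ∈ Vset k0 r n :=
  polyRing_subset_V k0 r n (Ffld_subset_polyRing k0 r n hx)

lemma mulGoodDen {n : ℕ} {g g' : Amb k0 r} (hg : GoodDen k0 r n g) (hg' : GoodDen k0 r n g') :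
    GoodDen k0 r n (g * g') := by
  rcases hg with ⟨p, hp, rfl, h0⟩
  rcases hg' with ⟨q, hq, rfl, h0'⟩
  refine ⟨p * q, fun i => by
    rw [Polynomial.coeff_mul]
    exact Subfield.sum_mem _ (fun c _ => Subfield.mul_mem _ (hp c.1) (hq c.2)),
    by rw [Polynomial.eval_mul], ?_⟩
  rw [Polynomial.mul_coeff_zero]
  exact mul_ne_zero h0 h0'

lemma add_mem_V (n : ℕ) {x y : Amb k0 r} (hx : x ∈ Vset k0 r n) (hy : y ∈ Vset k0 r n) :
    x + y ∈ Vset k0 r n := by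
  rw [mem_Vset_iff] at hx hy ⊢
  rcases hx with ⟨f₁, hf₁, g₁, hg₁, rfl⟩
  rcases hy with ⟨f₂, hf₂, g₂, hg₂, rfl⟩
  refine ⟨f₁ * g₂ + f₂ * g₁, Subring.add_mem _ (Subring.mul_mem _ hf₁ hg₂.mem)
    (Subring.mul_mem _ hf₂ hg₁.mem), g₁ * g₂, mulGoodDen k0 r hg₁ hg₂, ?_⟩
  rw [div_add_div _ _ hg₁.ne_zero hg₂.ne_zero]
  ring_nf

lemma mul_mem_V (n : ℕ) {x y : Amb k0 r} (hx : x ∈ Vset k0 r n) (hy : y ∈ Vset k0 r n) :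
    x * y ∈ Vset k0 r n := by
  rw [mem_Vset_iff] at hx hy ⊢
  rcases hx with ⟨f₁, hf₁, g₁, hg₁, rfl⟩
  rcases hy with ⟨f₂, hf₂, g₂, hg₂, rfl⟩
  exact ⟨f₁ * f₂, Subring.mul_mem _ hf₁ hf₂, g₁ * g₂, mulGoodDen k0 r hg₁ hg₂,
    by rw [div_mul_div_comm]⟩

lemma neg_mem_V (n : ℕ) {x : Amb k0 r} (hx : x ∈ Vset k0 r n) : -x ∈ Vset k0 r n := by
  rw [mem_Vset_iff] at hx ⊢
  rcases hx with ⟨f, hf, g, hg, rfl⟩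
  exact ⟨-f, Subring.neg_mem _ hf, g, hg, by rw [neg_div]⟩

lemma mem_Mset_iff (n : ℕ) {x : Amb k0 r} :
    x ∈ Mset k0 r n ↔ ∃ v ∈ Vset k0 r n, x = ambY k0 r * v := Iff.rfl

lemma zero_mem_M (n : ℕ) : (0 : Amb k0 r) ∈ Mset k0 r n :=
  ⟨0, zero_mem_V k0 r n, by ring⟩

lemma Y_mem_M (n : ℕ) : ambY k0 r ∈ Mset k0 r n :=
  ⟨1, one_mem_V k0 r n, by ring⟩

lemma add_mem_M (n : ℕ) {x y : Amb k0 r} (hx : x ∈ Mset k0 r n) (hy : y ∈ Mset k0 r n) :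
    x + y ∈ Mset k0 r n := by
  rcases hx with ⟨v, hv, rfl⟩
  rcases hy with ⟨w, hw, rfl⟩
  exact ⟨v + w, add_mem_V k0 r n hv hw, by ring⟩

lemma neg_mem_M (n : ℕ) {x : Amb k0 r} (hx : x ∈ Mset k0 r n) : -x ∈ Mset k0 r n := by
  rcases hx with ⟨v, hv, rfl⟩
  exact ⟨-v, neg_mem_V k0 r n hv, by ring⟩

lemma V_mul_M (n : ℕ) {v m : Amb k0 r} (hv : v ∈ Vset k0 r n) (hm : m ∈ Mset k0 r n) :
    v * m ∈ Mset k0 r n := by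
  rcases hm with ⟨w, hw, rfl⟩
  exact ⟨v * w, mul_mem_V k0 r n hv hw, by ring⟩

lemma M_subset_V (n : ℕ) {m : Amb k0 r} (hm : m ∈ Mset k0 r n) : m ∈ Vset k0 r n := by
  rcases hm with ⟨v, hv, rfl⟩
  exact mul_mem_V k0 r n (polyRing_subset_V k0 r n (Y_mem_polyRing k0 r n)) hv

lemma one_not_mem_M (n : ℕ) : (1 : Amb k0 r) ∉ Mset k0 r n := by
  rintro ⟨v, hv, hv1⟩
  rw [mem_Vset_iff] at hv
  rcases hv with ⟨f, hf, g, hg, rfl⟩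
  have hgne := hg.ne_zero
  rcases (mem_polyRing_iff k0 r n).1 hf with ⟨p, hp, rfl⟩
  rcases hg with ⟨q, hq, rfl, h0⟩
  have hq' : q.eval (ambY k0 r) = ambY k0 r * p.eval (ambY k0 r) := by
    field_simp at hv1
    rw [hv1]
  have hev : (q - Polynomial.X * p).eval (ambY k0 r) = 0 := by
    rw [Polynomial.eval_sub, Polynomial.eval_mul, Polynomial.eval_X, ← hq', sub_self]
  have hco : ∀ i, (q - Polynomial.X * p).coeff i ∈ Ffld k0 r n := by
    intro i
    rw [Polynomial.coeff_sub]
    exact Subfield.sub_mem _ (hq i) (coeff_X_mul_mem_subfield hp i)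
  have hqp := sub_eq_zero.1 (transEval k0 r n hco hev)
  rw [hqp, coeff_X_mul_zero] at h0
  exact h0 rfl

lemma kfld_not_mem_M (n : ℕ) {c : Amb k0 r} (hc : c ∈ kfld k0 r n) (hc0 : c ≠ 0) :
    c ∉ Mset k0 r n := by
  intro hM
  apply one_not_mem_M k0 r n
  have h1 : (1 : Amb k0 r) = c⁻¹ * c := by field_simp
  rw [h1]
  exact V_mul_M k0 r n (Ffld_subset_V k0 r n (kfld_le_Ffld k0 r n (Subfield.inv_mem _ hc))) hM

/-- `V` is local: `1 + M` consists of units of `V` with inverse in `1 + M`. -/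
lemma V_local (n : ℕ) {μ : Amb k0 r} (hμ : μ ∈ Mset k0 r n) :
    (1 + μ) ≠ 0 ∧ ∃ μ' ∈ Mset k0 r n, (1 + μ)⁻¹ = 1 + μ' := by
  rcases hμ with ⟨v, hv, rfl⟩
  rw [mem_Vset_iff] at hv
  rcases hv with ⟨f, hf, g, hg, rfl⟩
  have hgne := hg.ne_zero
  rcases (mem_polyRing_iff k0 r n).1 hf with ⟨p, hp, hfp⟩
  rcases hg with ⟨q, hq, hgq, h0⟩
  set Y := ambY k0 r with hY
  set N : Polynomial (Amb k0 r) := q + Polynomial.X * p with hN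
  have hNco : ∀ i, N.coeff i ∈ Ffld k0 r n := by
    intro i
    rw [hN, Polynomial.coeff_add]
    exact Subfield.add_mem _ (hq i) (coeff_X_mul_mem_subfield hp i)
  have hN0 : N.coeff 0 ≠ 0 := by
    rw [hN, Polynomial.coeff_add, coeff_X_mul_zero, add_zero]
    exact h0
  have hNgood : GoodDen k0 r n (N.eval Y) := ⟨N, hNco, rfl, hN0⟩
  have hNne : N.eval Y ≠ 0 := hNgood.ne_zero
  have hqne : q.eval Y ≠ 0 := by rw [← hgq]; exact hgne
  have hNval : N.eval Y = q.eval Y + Y * p.eval Y := by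
    rw [hN, Polynomial.eval_add, Polynomial.eval_mul, Polynomial.eval_X]
  have hkey : 1 + Y * (f / g) = N.eval Y / q.eval Y := by
    rw [hNval, hfp, hgq]
    field_simp
  constructor
  · rw [hkey]
    exact div_ne_zero hNne hqne
  · refine ⟨Y * ((-p).eval Y / N.eval Y), ⟨(-p).eval Y / N.eval Y, ?_, rfl⟩, ?_⟩
    · rw [mem_Vset_iff]
      exact ⟨(-p).eval Y, (mem_polyRing_iff k0 r n).2 ⟨-p, fun i => by
        rw [Polynomial.coeff_neg]; exact Subfield.neg_mem _ (hp i), rfl⟩, N.eval Y, hNgood, rfl⟩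
    · rw [hkey, inv_div, Polynomial.eval_neg, hNval]
      have hNne' : q.eval Y + Y * p.eval Y ≠ 0 := by rw [← hNval]; exact hNne
      have hcancel : (q.eval Y + Y * p.eval Y) * (q.eval Y + Y * p.eval Y)⁻¹ = 1 :=
        mul_inv_cancel₀ hNne'
      rw [div_eq_mul_inv, div_eq_mul_inv]
      linear_combination hcancel

/-- membership in `A`. -/
lemma mem_Aset_iff (n : ℕ) {x : Amb k0 r} :
    x ∈ Aset k0 r n ↔ ∃ c ∈ kfld k0 r n, ∃ m ∈ Mset k0 r n, x = c + m := Iff.rfl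

lemma kfld_subset_A (n : ℕ) {c : Amb k0 r} (hc : c ∈ kfld k0 r n) : c ∈ Aset k0 r n :=
  ⟨c, hc, 0, zero_mem_M k0 r n, by ring⟩

lemma M_subset_A (n : ℕ) {m : Amb k0 r} (hm : m ∈ Mset k0 r n) : m ∈ Aset k0 r n :=
  ⟨0, Subfield.zero_mem _, m, hm, by ring⟩

lemma A_subset_V (n : ℕ) {x : Amb k0 r} (hx : x ∈ Aset k0 r n) : x ∈ Vset k0 r n := by
  rcases hx with ⟨c, hc, m, hm, rfl⟩
  exact add_mem_V k0 r n (Ffld_subset_V k0 r n (kfld_le_Ffld k0 r n hc)) (M_subset_V k0 r n hm)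

lemma add_mem_A (n : ℕ) {x y : Amb k0 r} (hx : x ∈ Aset k0 r n) (hy : y ∈ Aset k0 r n) :
    x + y ∈ Aset k0 r n := by
  rcases hx with ⟨c, hc, m, hm, rfl⟩
  rcases hy with ⟨c', hc', m', hm', rfl⟩
  exact ⟨c + c', Subfield.add_mem _ hc hc', m + m', add_mem_M k0 r n hm hm', by ring⟩

lemma neg_mem_A (n : ℕ) {x : Amb k0 r} (hx : x ∈ Aset k0 r n) : -x ∈ Aset k0 r n := by
  rcases hx with ⟨c, hc, m, hm, rfl⟩
  exact ⟨-c, Subfield.neg_mem _ hc, -m, neg_mem_M k0 r n hm, by ring⟩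

lemma mul_mem_A (n : ℕ) {x y : Amb k0 r} (hx : x ∈ Aset k0 r n) (hy : y ∈ Aset k0 r n) :
    x * y ∈ Aset k0 r n := by
  rcases hx with ⟨c, hc, m, hm, rfl⟩
  rcases hy with ⟨c', hc', m', hm', rfl⟩
  refine ⟨c * c', Subfield.mul_mem _ hc hc', c * m' + m * c' + m * m', ?_, by ring⟩
  have h1 : c * m' ∈ Mset k0 r n :=
    V_mul_M k0 r n (Ffld_subset_V k0 r n (kfld_le_Ffld k0 r n hc)) hm'
  have h2 : m * c' ∈ Mset k0 r n := by
    rw [mul_comm]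
    exact V_mul_M k0 r n (Ffld_subset_V k0 r n (kfld_le_Ffld k0 r n hc')) hm
  have h3 : m * m' ∈ Mset k0 r n := V_mul_M k0 r n (M_subset_V k0 r n hm) hm'
  exact add_mem_M k0 r n (add_mem_M k0 r n h1 h2) h3

/-- The residue relation: `x` is congruent to `c ∈ kₙ` modulo `Mₙ`. -/
def Res (n : ℕ) (c x : Amb k0 r) : Prop :=
  c ∈ kfld k0 r n ∧ x - c ∈ Mset k0 r n

variable {k0 r}

lemma Res.mem_A {n : ℕ} {c x : Amb k0 r} (h : Res k0 r n c x) : x ∈ Aset k0 r n :=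
  ⟨c, h.1, x - c, h.2, by ring⟩

lemma Res.mem_V {n : ℕ} {c x : Amb k0 r} (h : Res k0 r n c x) : x ∈ Vset k0 r n :=
  A_subset_V k0 r n h.mem_A

lemma Res.of_kfld {n : ℕ} {c : Amb k0 r} (hc : c ∈ kfld k0 r n) : Res k0 r n c c :=
  ⟨hc, by rw [sub_self]; exact zero_mem_M k0 r n⟩

lemma Res.of_M {n : ℕ} {m : Amb k0 r} (hm : m ∈ Mset k0 r n) : Res k0 r n 0 m :=
  ⟨Subfield.zero_mem _, by rw [sub_zero]; exact hm⟩

lemma Res.add {n : ℕ} {c c' x x' : Amb k0 r} (h : Res k0 r n c x) (h' : Res k0 r n c' x') :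
    Res k0 r n (c + c') (x + x') :=
  ⟨Subfield.add_mem _ h.1 h'.1, by
    have heq : x + x' - (c + c') = (x - c) + (x' - c') := by ring
    rw [heq]; exact add_mem_M k0 r n h.2 h'.2⟩

lemma Res.mul {n : ℕ} {c c' x x' : Amb k0 r} (h : Res k0 r n c x) (h' : Res k0 r n c' x') :
    Res k0 r n (c * c') (x * x') := by
  refine ⟨Subfield.mul_mem _ h.1 h'.1, ?_⟩
  have heq : x * x' - c * c' = x * (x' - c') + c' * (x - c) := by ring
  rw [heq]
  exact add_mem_M k0 r n (V_mul_M k0 r n h.mem_V h'.2)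
    (V_mul_M k0 r n (Ffld_subset_V k0 r n (kfld_le_Ffld k0 r n h'.1)) h.2)

lemma Res.ne_zero {n : ℕ} {c x : Amb k0 r} (h : Res k0 r n c x) (hc : c ≠ 0) : x ≠ 0 := by
  rintro rfl
  apply kfld_not_mem_M k0 r n h.1 hc
  have heq : c = -(0 - c) := by ring
  rw [heq]
  exact neg_mem_M k0 r n h.2

lemma Res.inv {n : ℕ} {c x : Amb k0 r} (h : Res k0 r n c x) (hc : c ≠ 0) :
    Res k0 r n c⁻¹ x⁻¹ := by
  have hx : x ≠ 0 := h.ne_zero hc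
  have hrw : x = c * (1 + c⁻¹ * (x - c)) := by field_simp; ring
  have hmem : c⁻¹ * (x - c) ∈ Mset k0 r n :=
    V_mul_M k0 r n (Ffld_subset_V k0 r n (kfld_le_Ffld k0 r n (Subfield.inv_mem _ h.1))) h.2
  rcases V_local k0 r n hmem with ⟨hne, μ', hμ', hinv⟩
  refine ⟨Subfield.inv_mem _ h.1, ?_⟩
  have heq : x⁻¹ = c⁻¹ * (1 + μ') := by
    rw [hrw, mul_inv, hinv]
  rw [heq]
  have heq2 : c⁻¹ * (1 + μ') - c⁻¹ = c⁻¹ * μ' := by ring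
  rw [heq2]
  exact V_mul_M k0 r n (Ffld_subset_V k0 r n (kfld_le_Ffld k0 r n (Subfield.inv_mem _ h.1))) hμ'

lemma Res.one_pow {n : ℕ} {u : Amb k0 r} (h : Res k0 r n 1 u) (d : ℕ) :
    Res k0 r n 1 (u ^ d) := by
  induction d with
  | zero => rw [pow_zero]; exact Res.of_kfld (Subfield.one_mem _)
  | succ d ih =>
      have h2 := ih.mul h
      rwa [one_mul, ← pow_succ] at h2

variable (k0 r)

lemma kfld_mono {m n : ℕ} (h : m ≤ n) : kfld k0 r m ≤ kfld k0 r n := by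
  rw [kfld, Subfield.closure_le]
  apply Set.union_subset
  · intro x hx; exact Subfield.subset_closure (Or.inl hx)
  · rintro x ⟨i, h1, h2, rfl⟩
    exact Subfield.subset_closure (Or.inr ⟨i, h1, le_trans h2 h, rfl⟩)

lemma Ffld_mono {m n : ℕ} (h : m ≤ n) : Ffld k0 r m ≤ Ffld k0 r n := by
  rw [Ffld, Subfield.closure_le]
  apply Set.union_subset
  · intro x hx
    exact Subfield.subset_closure (Or.inl (kfld_mono k0 r h hx))
  · intro x hx
    exact Subfield.subset_closure (Or.inr hx)

lemma Vset_mono {m n : ℕ} (h : m ≤ n) : Vset k0 r m ⊆ Vset k0 r n := by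
  intro x hx
  rw [mem_Vset_iff] at hx ⊢
  rcases hx with ⟨f, hf, g, hg, rfl⟩
  rcases (mem_polyRing_iff k0 r m).1 hf with ⟨p, hp, rfl⟩
  rcases hg with ⟨q, hq, rfl, h0⟩
  exact ⟨p.eval (ambY k0 r), (mem_polyRing_iff k0 r n).2 ⟨p,
      fun i => Ffld_mono k0 r h (hp i), rfl⟩,
    q.eval (ambY k0 r), ⟨q, fun i => Ffld_mono k0 r h (hq i), rfl, h0⟩, rfl⟩

lemma Mset_mono {m n : ℕ} (h : m ≤ n) : Mset k0 r m ⊆ Mset k0 r n := by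
  rintro x ⟨v, hv, rfl⟩
  exact ⟨v, Vset_mono k0 r h hv, rfl⟩

lemma Aset_mono {m n : ℕ} (h : m ≤ n) : Aset k0 r m ⊆ Aset k0 r n := by
  rintro x ⟨c, hc, mm, hmm, rfl⟩
  exact ⟨c, kfld_mono k0 r h hc, mm, Mset_mono k0 r h hmm, rfl⟩

lemma polyRing_le_Kfld (n : ℕ) : (polyRing k0 r n : Set (Amb k0 r)) ⊆ ↑(Kfld k0 r n) := by
  intro x hx
  have h : polyRing k0 r n ≤ (Kfld k0 r n).toSubring := by
    rw [polyRing, Subring.closure_le]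
    intro y hy
    exact Subfield.subset_closure hy
  exact h hx

lemma mem_Kfld_iff (n : ℕ) {x : Amb k0 r} :
    x ∈ Kfld k0 r n ↔ ∃ a ∈ polyRing k0 r n, ∃ b ∈ polyRing k0 r n, a / b = x := by
  rw [Kfld, Subfield.mem_closure_iff]
  rfl

lemma Vset_subset_Kfld (n : ℕ) : Vset k0 r n ⊆ ↑(Kfld k0 r n) := by
  intro x hx
  rcases hx with ⟨f, hf, g, hg, _, rfl⟩
  exact Subfield.div_mem _ (polyRing_le_Kfld k0 r n hf) (polyRing_le_Kfld k0 r n hg)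

lemma Mset_subset_Kfld (n : ℕ) : Mset k0 r n ⊆ ↑(Kfld k0 r n) := by
  rintro x ⟨v, hv, rfl⟩
  exact Subfield.mul_mem _ (polyRing_le_Kfld k0 r n (Y_mem_polyRing k0 r n))
    (Vset_subset_Kfld k0 r n hv)

lemma kfld_le_Kfld (n : ℕ) : kfld k0 r n ≤ Kfld k0 r n := by
  intro x hx
  exact Subfield.subset_closure (Or.inl (kfld_le_Ffld k0 r n hx))

lemma Aset_subset_Kfld (n : ℕ) : Aset k0 r n ⊆ ↑(Kfld k0 r n) := by
  rintro x ⟨c, hc, m, hm, rfl⟩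
  exact Subfield.add_mem _ (kfld_le_Kfld k0 r n hc) (Mset_subset_Kfld k0 r n hm)

lemma Y_pow_div_aux (n : ℕ) : ∀ d : ℕ, ∀ q : Polynomial (Amb k0 r), q.natDegree ≤ d →
    (∀ i, q.coeff i ∈ Ffld k0 r n) → ∀ a ∈ polyRing k0 r n,
    ∃ k : ℕ, (ambY k0 r) ^ k * (a / q.eval (ambY k0 r)) ∈ Mset k0 r n := by
  intro d
  induction d with
  | zero =>
      intro q hdeg hq a ha
      by_cases hq0 : q.eval (ambY k0 r) = 0
      · exact ⟨0, by rw [hq0, div_zero, mul_zero]; exact zero_mem_M k0 r n⟩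
      by_cases h0 : q.coeff 0 = 0
      · exfalso
        apply hq0
        rw [Polynomial.eq_C_of_natDegree_le_zero hdeg, h0]
        simp
      · refine ⟨1, ?_⟩
        rw [pow_one]
        exact ⟨a / q.eval (ambY k0 r), (mem_Vset_iff k0 r n).2 ⟨a, ha,
          q.eval (ambY k0 r), ⟨q, hq, rfl, h0⟩, rfl⟩, rfl⟩
  | succ d ih =>
      intro q hdeg hq a ha
      by_cases hq0 : q.eval (ambY k0 r) = 0
      · exact ⟨0, by rw [hq0, div_zero, mul_zero]; exact zero_mem_M k0 r n⟩
      by_cases h0 : q.coeff 0 = 0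
      · have hqne : q ≠ 0 := fun h => hq0 (by rw [h]; simp)
        have hqd : q = Polynomial.X * q.divX := by
          conv_lhs => rw [← Polynomial.X_mul_divX_add q]
          rw [h0]
          simp
        have hdegd : q.divX.natDegree ≤ d := by
          rw [Polynomial.natDegree_divX_eq_natDegree_tsub_one]
          omega
        rcases ih q.divX hdegd (fun i => by rw [Polynomial.coeff_divX]; exact hq _) a ha
          with ⟨k, hk⟩
        refine ⟨k + 1, ?_⟩
        have hdvne : (q.divX).eval (ambY k0 r) ≠ 0 := by
          intro h
          apply hq0
          conv_lhs => rw [hqd]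
          rw [Polynomial.eval_mul, h, mul_zero]
        have heq : ambY k0 r ^ (k + 1) * (a / q.eval (ambY k0 r)) =
            ambY k0 r ^ k * (a / (q.divX).eval (ambY k0 r)) := by
          conv_lhs => rw [hqd]
          rw [Polynomial.eval_mul, Polynomial.eval_X, pow_succ]
          have hYne := ambY_ne k0 r
          field_simp
        rw [heq]
        exact hk
      · refine ⟨1, ?_⟩
        rw [pow_one]
        exact ⟨a / q.eval (ambY k0 r), (mem_Vset_iff k0 r n).2 ⟨a, ha,
          q.eval (ambY k0 r), ⟨q, hq, rfl, h0⟩, rfl⟩, rfl⟩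

/-- every element of `Kₙ` lands in `Mₙ` after multiplying by a power of `Y`. -/
lemma Y_pow_mul_mem_M (n : ℕ) {x : Amb k0 r} (hx : x ∈ Kfld k0 r n) :
    ∃ k : ℕ, (ambY k0 r) ^ k * x ∈ Mset k0 r n := by
  rcases (mem_Kfld_iff k0 r n).1 hx with ⟨a, ha, b, hb, rfl⟩
  rcases (mem_polyRing_iff k0 r n).1 hb with ⟨q, hq, rfl⟩
  exact Y_pow_div_aux k0 r n q.natDegree q le_rfl hq a ha

end FKtower
namespace FKtower

variable (k0 : Type) [Field k0] (r : ℕ)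

lemma Bset_def {n : ℕ} :
    Bset k0 r n = krSet k0 r (Dset k0 r (n-1)) (Kfld k0 r (n-1)) (ambX' k0 r n) := rfl

lemma Dset_eq {n : ℕ} (hn : 2 ≤ n) :
    Dset k0 r n = Bset k0 r n ∩ Aset k0 r n := by
  obtain ⟨m, rfl⟩ : ∃ m, n = m + 2 := ⟨n - 2, by omega⟩
  rfl

lemma Dset_subset_A {n : ℕ} (hn : 1 ≤ n) : Dset k0 r n ⊆ Aset k0 r n := by
  rcases Nat.lt_or_ge n 2 with h | h
  · have : n = 1 := by omega
    subst this
    exact fun x hx => hx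
  · rw [Dset_eq k0 r h]
    exact Set.inter_subset_right

lemma Dset_subset_Kfld {n : ℕ} (hn : 1 ≤ n) : Dset k0 r n ⊆ ↑(Kfld k0 r n) :=
  fun x hx => Aset_subset_Kfld k0 r n (Dset_subset_A k0 r hn hx)

lemma unitContent_one {S : Set (Amb k0 r)} (h1 : (1 : Amb k0 r) ∈ S) :
    unitContent k0 r S 1 := by
  refine ⟨{0}, fun _ => 1, fun i _ => h1, ?_⟩
  rw [Finset.sum_singleton]
  simp

lemma mem_nagata_of_mem (W : Subring (Amb k0 r)) (T : Amb k0 r) {x : Amb k0 r} (hx : x ∈ W) :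
    x ∈ nagataSet k0 r ↑W T := by
  refine ⟨Polynomial.C x, 1, CoeffsIn.C hx, CoeffsIn.one, unitContent_one k0 r (W.one_mem), ?_⟩
  simp

lemma Dprev_subset_B {n : ℕ} :
    Dset k0 r (n-1) ⊆ Bset k0 r n := by
  intro x hx
  rw [Bset_def, krSet]
  refine Set.mem_iInter₂.2 (fun W hW => ?_)
  exact mem_nagata_of_mem k0 r W _ (hW.1 hx)

lemma zero_mem_D {n : ℕ} (hn : 1 ≤ n) : (0 : Amb k0 r) ∈ Dset k0 r n := by
  rcases Nat.lt_or_ge n 2 with h | h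
  · have hone : n = 1 := by omega
    subst hone
    exact M_subset_A k0 r 1 (zero_mem_M k0 r 1)
  · rw [Dset_eq k0 r h]
    constructor
    · rw [Bset_def, krSet]
      exact Set.mem_iInter₂.2 (fun W hW => mem_nagata_of_mem k0 r W _ (W.zero_mem))
    · exact M_subset_A k0 r n (zero_mem_M k0 r n)

lemma Y_mem_D {n : ℕ} (hn : 1 ≤ n) : ambY k0 r ∈ Dset k0 r n := by
  induction n with
  | zero => omega
  | succ m ih =>
      rcases Nat.lt_or_ge m 1 with h | h
      · have hone : m = 0 := by omega
        subst hone
        exact M_subset_A k0 r 1 (Y_mem_M k0 r 1)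
      · rw [Dset_eq k0 r (by omega)]
        refine ⟨Dprev_subset_B k0 r ?_, M_subset_A k0 r (m+1) (Y_mem_M k0 r (m+1))⟩
        have hsub : m + 1 - 1 = m := rfl
        rw [hsub]
        exact ih h

lemma Dset_mono_succ {n : ℕ} (hn : 1 ≤ n) : Dset k0 r n ⊆ Dset k0 r (n+1) := by
  intro x hx
  rw [Dset_eq k0 r (by omega)]
  refine ⟨Dprev_subset_B k0 r ?_, Aset_mono k0 r (by omega) (Dset_subset_A k0 r hn hx)⟩
  have hsub : n + 1 - 1 = n := rfl
  rw [hsub]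
  exact hx

lemma ambX_mem_kfld {i n : ℕ} (h1 : 1 ≤ i) (h2 : i ≤ n) : ambX k0 r i ∈ kfld k0 r n :=
  Subfield.subset_closure (Or.inr ⟨i, h1, h2, rfl⟩)

lemma Y_mem_Kfld (n : ℕ) : ambY k0 r ∈ Kfld k0 r n :=
  Subfield.subset_closure (Or.inr rfl)

lemma Kfld_mono {m n : ℕ} (h : m ≤ n) : Kfld k0 r m ≤ Kfld k0 r n := by
  rw [Kfld, Subfield.closure_le]
  apply Set.union_subset
  · intro x hx
    exact Subfield.subset_closure (Or.inl (Ffld_mono k0 r h hx))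
  · intro x hx
    exact Subfield.subset_closure (Or.inr hx)

lemma ambX'_mem_Kfld {n : ℕ} (hn : 1 ≤ n) : ambX' k0 r n ∈ Kfld k0 r n := by
  rw [ambX']
  apply Subfield.div_mem
  · apply Subfield.add_mem _ (Subfield.one_mem _)
    exact Subfield.mul_mem _ (Y_mem_Kfld k0 r n)
      (kfld_le_Kfld k0 r n (ambX_mem_kfld k0 r hn le_rfl))
  · exact Y_mem_Kfld k0 r n

lemma Kfld_mem_valOverrings {n : ℕ} (hn : 1 ≤ n) :
    (Kfld k0 r n).toSubring ∈ valOverringsIn k0 r (Dset k0 r n) (Kfld k0 r n) := by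
  refine ⟨Dset_subset_Kfld k0 r hn, fun x hx => hx, fun x hx => Or.inl hx⟩

lemma Bset_subset_Kfld {n : ℕ} (hn : 2 ≤ n) : Bset k0 r n ⊆ ↑(Kfld k0 r n) := by
  intro b hb
  rw [Bset_def, krSet] at hb
  have hmem := Set.mem_iInter₂.1 hb (Kfld k0 r (n-1)).toSubring
    (Kfld_mem_valOverrings k0 r (by omega))
  rcases hmem with ⟨f, g, hf, hg, -, rfl⟩
  have hT : ambX' k0 r n ∈ Kfld k0 r n := ambX'_mem_Kfld k0 r (by omega)
  have hle : Kfld k0 r (n-1) ≤ Kfld k0 r n := Kfld_mono k0 r (by omega)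
  apply Subfield.div_mem
  · exact eval_mem_subfield (fun i => hle (hf i)) hT
  · exact eval_mem_subfield (fun i => hle (hg i)) hT

end FKtower
namespace FKtower

variable (k0 : Type) [Field k0] (r : ℕ)

lemma sum_mem_M (n : ℕ) {ι : Type*} (s : Finset ι) (f : ι → Amb k0 r)
    (h : ∀ j ∈ s, f j ∈ Mset k0 r n) : ∑ j ∈ s, f j ∈ Mset k0 r n :=
  Finset.sum_induction f (· ∈ Mset k0 r n) (fun _ _ ha hb => add_mem_M k0 r n ha hb)
    (zero_mem_M k0 r n) h

/-- representation of elements of `k_{m+1}` as rational functions of `X_{m+1}` over `k_m`. -/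
lemma mem_kfld_succ (m : ℕ) {c : Amb k0 r} (hc : c ∈ kfld k0 r (m+1)) :
    ∃ pN pD : Polynomial (Amb k0 r),
      (∀ i, pN.coeff i ∈ kfld k0 r m) ∧ (∀ i, pD.coeff i ∈ kfld k0 r m) ∧
      c = pN.eval (ambX k0 r (m+1)) / pD.eval (ambX k0 r (m+1)) := by
  rw [kfld, Subfield.mem_closure_iff] at hc
  obtain ⟨y, hy, z, hz, hyz⟩ := hc
  let SR : Subring (Amb k0 r) :=
    { carrier := {x | ∃ p : Polynomial (Amb k0 r),
        (∀ i, p.coeff i ∈ kfld k0 r m) ∧ x = p.eval (ambX k0 r (m+1))},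
      one_mem' := ⟨1, coeff_one_mem_subfield _, by simp⟩,
      zero_mem' := ⟨0, fun i => by rw [Polynomial.coeff_zero]; exact Subfield.zero_mem _, by simp⟩,
      add_mem' := by
        rintro a b ⟨p, hp, rfl⟩ ⟨q, hq, rfl⟩
        exact ⟨p + q, fun i => by
          rw [Polynomial.coeff_add]; exact Subfield.add_mem _ (hp i) (hq i), by simp⟩,
      neg_mem' := by
        rintro a ⟨p, hp, rfl⟩
        exact ⟨-p, fun i => by
          rw [Polynomial.coeff_neg]; exact Subfield.neg_mem _ (hp i), by simp⟩,
      mul_mem' := by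
        rintro a b ⟨p, hp, rfl⟩ ⟨q, hq, rfl⟩
        exact ⟨p * q, fun i => by
          rw [Polynomial.coeff_mul]
          exact Subfield.sum_mem _ (fun cc _ => Subfield.mul_mem _ (hp cc.1) (hq cc.2)),
          by simp⟩ }
  have hle : Subring.closure
      (baseSet k0 r ∪ {x | ∃ i, 1 ≤ i ∧ i ≤ m+1 ∧ x = ambX k0 r i}) ≤ SR := by
    rw [Subring.closure_le]
    rintro x (hx | ⟨i, hi1, hi2, rfl⟩)
    · exact ⟨Polynomial.C x, coeff_C_mem_subfield (Subfield.subset_closure (Or.inl hx)), by simp⟩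
    · rcases Nat.lt_or_ge i (m+1) with h | h
      · exact ⟨Polynomial.C (ambX k0 r i),
          coeff_C_mem_subfield (ambX_mem_kfld k0 r hi1 (by omega)), by simp⟩
      · have hieq : i = m+1 := by omega
        subst hieq
        exact ⟨Polynomial.X, coeff_X_mem_subfield _, by simp⟩
  obtain ⟨pN, hN, rfl⟩ := hle hy
  obtain ⟨pD, hD, rfl⟩ := hle hz
  exact ⟨pN, pD, hN, hD, hyz.symm⟩



section GenField

open Polynomial

variable {K : Type*} [Field K]

/-- the generic lift polynomial -/
noncomputable def genF (Y : K) (lt : ℕ → K) (d : ℕ) : Polynomial K :=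
  ∑ j ∈ Finset.range (d+1),
    Polynomial.C (lt j) * (Polynomial.C Y * Polynomial.X - 1) ^ j * Polynomial.C (Y ^ (d - j))

lemma genF_coeff_zero (Y : K) (lt : ℕ → K) (d : ℕ) :
    (genF Y lt d).coeff 0 = ∑ j ∈ Finset.range (d+1), lt j * (-1)^j * Y^(d-j) := by
  rw [genF, Polynomial.coeff_zero_eq_eval_zero, Polynomial.eval_finset_sum]
  apply Finset.sum_congr rfl
  intro j _
  simp only [Polynomial.eval_mul, Polynomial.eval_pow, Polynomial.eval_sub,
    Polynomial.eval_one, Polynomial.eval_C, Polynomial.eval_X, mul_zero, zero_sub]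

lemma genF_coeff_top (Y : K) (hY : Y ≠ 0) (lt : ℕ → K) (d : ℕ) :
    (genF Y lt d).coeff d = lt d * Y ^ d := by
  rw [genF, Polynomial.finset_sum_coeff, Finset.sum_range_succ]
  have hzero : ∀ j ∈ Finset.range d,
      (Polynomial.C (lt j) * (Polynomial.C Y * Polynomial.X - 1) ^ j *
        Polynomial.C (Y ^ (d - j))).coeff d = 0 := by
    intro j hj
    rw [Finset.mem_range] at hj
    apply Polynomial.coeff_eq_zero_of_natDegree_lt
    have h1 : (Polynomial.C Y * Polynomial.X - 1 : Polynomial K).natDegree ≤ 1 := by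
      have heq : Polynomial.C Y * Polynomial.X - 1 =
          Polynomial.C Y * Polynomial.X + Polynomial.C (-1 : K) := by
        rw [Polynomial.C_neg, Polynomial.C_1]
        ring
      rw [heq]
      exact Polynomial.natDegree_linear_le
    have h2 : ((Polynomial.C Y * Polynomial.X - 1 : Polynomial K) ^ j).natDegree ≤ j := by
      calc ((Polynomial.C Y * Polynomial.X - 1 : Polynomial K) ^ j).natDegree
          ≤ j * (Polynomial.C Y * Polynomial.X - 1 : Polynomial K).natDegree :=
            Polynomial.natDegree_pow_le
        _ ≤ j * 1 := Nat.mul_le_mul_left j h1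
        _ = j := mul_one j
    calc (Polynomial.C (lt j) * (Polynomial.C Y * Polynomial.X - 1) ^ j *
          Polynomial.C (Y ^ (d - j))).natDegree
        ≤ (Polynomial.C (lt j) * (Polynomial.C Y * Polynomial.X - 1) ^ j).natDegree
          + (Polynomial.C (Y ^ (d-j))).natDegree := Polynomial.natDegree_mul_le
      _ ≤ ((Polynomial.C (lt j)).natDegree
          + ((Polynomial.C Y * Polynomial.X - 1) ^ j).natDegree) + 0 := by
          rw [Polynomial.natDegree_C]
          exact add_le_add Polynomial.natDegree_mul_le le_rfl
      _ ≤ (0 + j) + 0 := by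
          rw [Polynomial.natDegree_C]
          exact add_le_add (add_le_add le_rfl h2) le_rfl
      _ < d := by omega
  rw [Finset.sum_eq_zero hzero, zero_add, Nat.sub_self, pow_zero, Polynomial.C_1, mul_one]
  have hlin : Polynomial.C Y * Polynomial.X - 1 =
      Polynomial.C Y * (Polynomial.X - Polynomial.C Y⁻¹) := by
    rw [mul_sub, ← Polynomial.C_mul, mul_inv_cancel₀ hY, Polynomial.C_1]
  rw [Polynomial.coeff_C_mul, hlin, mul_pow, ← Polynomial.C_pow, Polynomial.coeff_C_mul]
  have hmon : ((Polynomial.X - Polynomial.C (Y⁻¹ : K)) ^ d).coeff d = 1 := by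
    have hmd := (Polynomial.monic_X_sub_C (Y⁻¹ : K)).pow d
    have hnd : ((Polynomial.X - Polynomial.C (Y⁻¹ : K)) ^ d).natDegree = d := by
      rw [Polynomial.natDegree_pow, Polynomial.natDegree_X_sub_C, mul_one]
    have hcn := hmd.coeff_natDegree
    rwa [hnd] at hcn
  rw [hmon, mul_one]

lemma genF_eval (Y : K) (lt : ℕ → K) (d : ℕ) (T : K) :
    (genF Y lt d).eval T =
      ∑ j ∈ Finset.range (d+1), lt j * (Y * T - 1)^j * Y^(d-j) := by
  rw [genF, Polynomial.eval_finset_sum]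
  apply Finset.sum_congr rfl
  intro j _
  simp only [Polynomial.eval_mul, Polynomial.eval_pow, Polynomial.eval_sub,
    Polynomial.eval_one, Polynomial.eval_C, Polynomial.eval_X]

end GenField


set_option maxHeartbeats 3200000 in
/-- The core construction: unit-content lift of a polynomial in `X_{m+1}` over `k_m`. -/
lemma unit_lift_poly (m : ℕ) (hm : 1 ≤ m)
    (ih : ∀ c ∈ kfld k0 r m, c ≠ 0 →
      ∃ e, e ∈ Dset k0 r m ∧ e⁻¹ ∈ Dset k0 r m ∧ Res k0 r m c e)
    (p : Polynomial (Amb k0 r)) (hp : ∀ i, p.coeff i ∈ kfld k0 r m) (hpne : p ≠ 0) :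
    ∃ g : Polynomial (Amb k0 r),
      (∀ W ∈ valOverringsIn k0 r (Dset k0 r m) (Kfld k0 r m),
        (∀ i, g.coeff i ∈ (W : Set (Amb k0 r))) ∧ unitContent k0 r (↑W) g) ∧
      Res k0 r (m+1) (p.eval (ambX k0 r (m+1))) (g.eval (ambX' k0 r (m+1))) := by
  classical
  set Y := ambY k0 r with hYdef
  set Xnew := ambX k0 r (m+1) with hXdef
  set T := ambX' k0 r (m+1) with hTdef
  have hYne : Y ≠ 0 := ambY_ne k0 r
  have hYT : Y * T = 1 + Y * Xnew := by
    rw [hTdef, ambX', mul_div_cancel₀ _ hYne]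
  have hYT' : Y * T - 1 = Y * Xnew := by rw [hYT]; ring
  set d := p.natDegree with hd
  -- lifts of the coefficients
  have hliftex : ∀ j : ℕ, ∃ e : Amb k0 r, e ∈ Dset k0 r m ∧ Res k0 r m (p.coeff j) e ∧
      (p.coeff j ≠ 0 → e⁻¹ ∈ Dset k0 r m) := by
    intro j
    by_cases h0 : p.coeff j = 0
    · refine ⟨0, zero_mem_D k0 r hm, ?_, fun h => absurd h0 h⟩
      rw [h0]
      exact ⟨Subfield.zero_mem _, by rw [sub_zero]; exact zero_mem_M k0 r m⟩
    · obtain ⟨e, he1, he2, he3⟩ := ih (p.coeff j) (hp j) h0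
      exact ⟨e, he1, he3, fun _ => he2⟩
  choose lt hlt1 hlt2 hlt3 using hliftex
  have htopne : p.coeff d ≠ 0 := Polynomial.leadingCoeff_ne_zero.2 hpne
  have hαinv : (lt d)⁻¹ ∈ Dset k0 r m := hlt3 d htopne
  have hαne : lt d ≠ 0 := (hlt2 d).ne_zero htopne
  have hYD : Y ∈ Dset k0 r m := Y_mem_D k0 r hm
  set ε : Amb k0 r := (-1) ^ d with hεdef
  have hεε : ε * ε = 1 := by
    rw [hεdef, ← pow_add, ← two_mul, pow_mul, neg_one_sq, one_pow]
  set F : Polynomial (Amb k0 r) := genF Y lt d with hF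
  set hh : Amb k0 r := ∑ j ∈ Finset.range d, lt j * (-1)^j * Y^(d-1-j) with hhdef
  have hsplit : F.coeff 0 = ε * lt d + Y * hh := by
    rw [hF, genF_coeff_zero, Finset.sum_range_succ, Nat.sub_self, pow_zero, mul_one]
    have hS : ∑ j ∈ Finset.range d, lt j * (-1:Amb k0 r)^j * Y^(d-j) = Y * hh := by
      rw [hhdef, Finset.mul_sum]
      apply Finset.sum_congr rfl
      intro j hj
      rw [Finset.mem_range] at hj
      have hYj : Y ^ (d - j) = Y * Y ^ (d-1-j) := by
        rw [← pow_succ']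
        congr 1
        omega
      rw [hYj]
      ring
    rw [hS, hεdef]
    ring
  have hcoefftop : F.coeff d = lt d * Y^d := by
    rw [hF]
    exact genF_coeff_top Y hYne lt d
  refine ⟨F * Polynomial.X ^ d, ?_, ?_⟩
  · -- coefficients and unit content in each valuation overring
    intro W hW
    obtain ⟨hDW, hWK, hdich⟩ := hW
    have hYW : Y ∈ W := hDW hYD
    have hltW : ∀ j, lt j ∈ W := fun j => hDW (hlt1 j)
    have hεW : ε ∈ W := by
      rw [hεdef]
      exact W.pow_mem (W.neg_mem W.one_mem) d
    have hFco : CoeffsIn k0 r ↑W F := by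
      rw [hF, genF]
      apply CoeffsIn.sum
      intro j _
      exact ((CoeffsIn.C (hltW j)).mul
        ((((CoeffsIn.C hYW).mul CoeffsIn.X).sub CoeffsIn.one).pow j)).mul
        (CoeffsIn.C (W.pow_mem hYW _))
    have hgco : CoeffsIn k0 r ↑W (F * Polynomial.X ^ d) := hFco.mul (CoeffsIn.X.pow d)
    refine ⟨hgco, ?_⟩
    have hgd : (F * Polynomial.X ^ d).coeff (0 + d) = F.coeff 0 :=
      Polynomial.coeff_mul_X_pow F d 0
    rw [zero_add] at hgd
    have hgdd : (F * Polynomial.X ^ d).coeff (d + d) = F.coeff d :=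
      Polynomial.coeff_mul_X_pow F d d
    have hhW : hh ∈ W := by
      rw [hhdef]
      apply Subring.sum_mem
      intro j _
      exact W.mul_mem (W.mul_mem (hltW j) (W.pow_mem (W.neg_mem W.one_mem) j))
        (W.pow_mem hYW _)
    by_cases hYinv : (Y⁻¹ : Amb k0 r) ∈ W
    · -- use the top coefficient
      refine ⟨{d + d}, fun _ => (lt d)⁻¹ * (Y⁻¹)^d,
        fun i _ => W.mul_mem (hDW hαinv) (W.pow_mem hYinv d), ?_⟩
      rw [Finset.sum_singleton, hgdd, hcoefftop]
      field_simp
      rw [← mul_pow, one_div, inv_mul_cancel₀ hYne, one_pow]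
    · -- the constant coefficient is a unit of W
      set γ : Amb k0 r := F.coeff 0 with hγdef
      have hαα : lt d * (lt d)⁻¹ = 1 := mul_inv_cancel₀ hαne
      have hγne : γ ≠ 0 := by
        intro hγ0
        apply hYinv
        have hε0 : ε * lt d + Y * hh = 0 := by rw [← hsplit]; exact hγ0
        have hc : (-hh * (lt d)⁻¹ * ε) * Y = 1 := by
          have he1 : (-hh * (lt d)⁻¹ * ε) * Y = -(Y * hh) * (lt d)⁻¹ * ε := by ring
          have he2 : Y * hh = -(ε * lt d) := by linear_combination hε0
          rw [he1, he2]
          have he3 : - -(ε * lt d) * (lt d)⁻¹ * ε = (ε * ε) * (lt d * (lt d)⁻¹) := by ring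
          rw [he3, hεε, hαα, one_mul]
        have hYi : Y⁻¹ = -hh * (lt d)⁻¹ * ε := (eq_inv_of_mul_eq_one_left hc).symm
        rw [hYi]
        exact W.mul_mem (W.mul_mem (W.neg_mem hhW) (hDW hαinv)) hεW
      have hγW : γ ∈ W := hFco 0
      have hγinvW : γ⁻¹ ∈ W := by
        by_cases hhzero : hh = 0
        · have hγeq : γ = ε * lt d := by rw [hsplit, hhzero, mul_zero, add_zero]
          have hc : (ε * (lt d)⁻¹) * γ = 1 := by
            rw [hγeq]
            have he3 : (ε * (lt d)⁻¹) * (ε * lt d) = (ε * ε) * (lt d * (lt d)⁻¹) := by ring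
            rw [he3, hεε, hαα, one_mul]
          have hγi : γ⁻¹ = ε * (lt d)⁻¹ := (eq_inv_of_mul_eq_one_left hc).symm
          rw [hγi]
          exact W.mul_mem hεW (hDW hαinv)
        · set z : Amb k0 r := Y * hh * γ⁻¹ with hzdef
          have hzK : z ∈ Kfld k0 r m := by
            rw [hzdef]
            exact Subfield.mul_mem _ (Subfield.mul_mem _ (Y_mem_Kfld k0 r m) (hWK hhW))
              (Subfield.inv_mem _ (hWK hγW))
          rcases hdich z hzK with hzW | hzW
          · have hzγ : z * γ = Y * hh := by
              rw [hzdef]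
              field_simp
            have h1 : (1 - z) * γ = ε * lt d := by
              have he1 : (1 - z) * γ = γ - z * γ := by ring
              rw [he1, hzγ, hsplit]
              ring
            have hc : (ε * (lt d)⁻¹ * (1 - z)) * γ = 1 := by
              have he2 : (ε * (lt d)⁻¹ * (1 - z)) * γ = ε * (lt d)⁻¹ * ((1 - z) * γ) := by ring
              rw [he2, h1]
              have he3 : ε * (lt d)⁻¹ * (ε * lt d) = (ε * ε) * (lt d * (lt d)⁻¹) := by ring
              rw [he3, hεε, hαα, one_mul]
            have hγi : γ⁻¹ = ε * (lt d)⁻¹ * (1 - z) := (eq_inv_of_mul_eq_one_left hc).symm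
            rw [hγi]
            exact W.mul_mem (W.mul_mem hεW (hDW hαinv)) (W.sub_mem W.one_mem hzW)
          · exfalso
            apply hYinv
            have hYhne : Y * hh ≠ 0 := mul_ne_zero hYne hhzero
            have hstep : z⁻¹ - 1 = (ε * lt d) * (Y * hh)⁻¹ := by
              have hz' : z⁻¹ = γ * (Y * hh)⁻¹ := by
                rw [hzdef, mul_inv, inv_inv]
                ring
              rw [hz', hsplit]
              field_simp
              ring
            have hc2 : (ε * (lt d)⁻¹ * hh * (z⁻¹ - 1)) * Y = 1 := by
              rw [hstep]
              have he4 : (ε * (lt d)⁻¹ * hh * (ε * lt d * (Y * hh)⁻¹)) * Y =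
                  ((ε * ε) * (lt d * (lt d)⁻¹)) * ((Y * hh) * (Y * hh)⁻¹) := by ring
              rw [he4, hεε, hαα, mul_inv_cancel₀ hYhne, one_mul, one_mul]
            have hYi : Y⁻¹ = ε * (lt d)⁻¹ * hh * (z⁻¹ - 1) :=
              (eq_inv_of_mul_eq_one_left hc2).symm
            rw [hYi]
            exact W.mul_mem (W.mul_mem (W.mul_mem hεW (hDW hαinv)) hhW)
              (W.sub_mem hzW W.one_mem)
      refine ⟨{d}, fun _ => γ⁻¹, fun i _ => hγinvW, ?_⟩
      rw [Finset.sum_singleton, hgd]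
      exact inv_mul_cancel₀ hγne
  · -- the residue computation
    set L : Amb k0 r := ∑ j ∈ Finset.range (d+1), lt j * Xnew ^ j with hLdef
    have hXnewk : Xnew ∈ kfld k0 r (m+1) := ambX_mem_kfld k0 r (by omega) le_rfl
    have hXnewV : ∀ j : ℕ, Xnew ^ j ∈ Vset k0 r (m+1) := fun j =>
      Ffld_subset_V k0 r (m+1) (kfld_le_Ffld k0 r (m+1) (Subfield.pow_mem _ hXnewk j))
    have hgval : (F * Polynomial.X ^ d).eval T = (1 + Y * Xnew)^d * L := by
      rw [Polynomial.eval_mul, Polynomial.eval_pow, Polynomial.eval_X, hF, genF_eval]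
      have h1 : ∀ j ∈ Finset.range (d+1),
          lt j * (Y * T - 1)^j * Y^(d-j) = Y ^ d * (lt j * Xnew ^ j) := by
        intro j hj
        rw [Finset.mem_range] at hj
        have hj' : j ≤ d := by omega
        rw [hYT', mul_pow]
        rw [show lt j * (Y^j * Xnew^j) * Y^(d-j) = (Y^j * Y^(d-j)) * (lt j * Xnew^j) by ring]
        rw [← pow_add, Nat.add_sub_cancel' hj']
      rw [Finset.sum_congr rfl h1, ← Finset.mul_sum, ← hLdef]
      rw [show Y^d * L * T^d = (Y*T)^d * L by rw [mul_pow]; ring, hYT]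
    have hResL : Res k0 r (m+1) (p.eval Xnew) L := by
      refine ⟨eval_mem_subfield (fun i => kfld_mono k0 r (Nat.le_succ m) (hp i)) hXnewk, ?_⟩
      have hev : p.eval Xnew = ∑ j ∈ Finset.range (d+1), p.coeff j * Xnew ^ j := by
        rw [Polynomial.eval_eq_sum_range]
      rw [hLdef, hev, ← Finset.sum_sub_distrib]
      apply sum_mem_M
      intro j _
      rw [show lt j * Xnew ^ j - p.coeff j * Xnew ^ j = Xnew ^ j * (lt j - p.coeff j) by ring]
      exact V_mul_M k0 r (m+1) (hXnewV j) (Mset_mono k0 r (Nat.le_succ m) (hlt2 j).2)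
    have hResU : Res k0 r (m+1) 1 ((1 + Y * Xnew)^d) := by
      apply Res.one_pow
      refine ⟨Subfield.one_mem _, ?_⟩
      rw [show 1 + Y * Xnew - 1 = Xnew * Y by ring]
      exact V_mul_M k0 r (m+1) (Ffld_subset_V k0 r (m+1) (kfld_le_Ffld k0 r (m+1) hXnewk))
        (Y_mem_M k0 r (m+1))
    have hfinal := hResU.mul hResL
    rw [one_mul] at hfinal
    rw [hgval]
    exact hfinal

set_option maxHeartbeats 1600000 in
/-- Unit lifts: every nonzero element of `kₙ` has a lift in `Dₙ` that is a unit of `Dₙ`. -/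
theorem UL : ∀ n : ℕ, 1 ≤ n → ∀ c ∈ kfld k0 r n, c ≠ 0 →
    ∃ e, e ∈ Dset k0 r n ∧ e⁻¹ ∈ Dset k0 r n ∧ Res k0 r n c e := by
  intro n
  induction n with
  | zero => omega
  | succ m ih =>
      intro _ c hc hcne
      rcases Nat.lt_or_ge m 1 with hm | hm
      · have hm0 : m = 0 := by omega
        subst hm0
        exact ⟨c, kfld_subset_A k0 r 1 hc, kfld_subset_A k0 r 1 (Subfield.inv_mem _ hc),
          Res.of_kfld hc⟩
      · obtain ⟨pN, pD, hN, hD, hrep⟩ := mem_kfld_succ k0 r m hc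
        have hDne : pD.eval (ambX k0 r (m+1)) ≠ 0 := by
          intro h; apply hcne; rw [hrep, h, div_zero]
        have hNne : pN.eval (ambX k0 r (m+1)) ≠ 0 := by
          intro h; apply hcne; rw [hrep, h, zero_div]
        have hpNne : pN ≠ 0 := fun h => hNne (by rw [h]; simp)
        have hpDne : pD ≠ 0 := fun h => hDne (by rw [h]; simp)
        obtain ⟨gN, hgN, hResN⟩ := unit_lift_poly k0 r m hm (fun c hc hne => ih hm c hc hne)
          pN hN hpNne
        obtain ⟨gD, hgD, hResD⟩ := unit_lift_poly k0 r m hm (fun c hc hne => ih hm c hc hne)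
          pD hD hpDne
        set T := ambX' k0 r (m+1) with hTdef
        set e := gN.eval T / gD.eval T with he
        have heB : e ∈ Bset k0 r (m+1) := by
          rw [Bset_def, krSet]
          refine Set.mem_iInter₂.2 (fun W hW => ?_)
          exact ⟨gN, gD, (hgN W hW).1, (hgD W hW).1, (hgD W hW).2, rfl⟩
        have heBi : e⁻¹ ∈ Bset k0 r (m+1) := by
          rw [he, inv_div]
          rw [Bset_def, krSet]
          refine Set.mem_iInter₂.2 (fun W hW => ?_)
          exact ⟨gD, gN, (hgD W hW).1, (hgN W hW).1, (hgN W hW).2, rfl⟩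
        have hRes : Res k0 r (m+1) c e := by
          have h1 := hResN.mul (hResD.inv hDne)
          rw [he, div_eq_mul_inv, hrep, div_eq_mul_inv]
          exact h1
        refine ⟨e, ?_, ?_, hRes⟩
        · rw [Dset_eq k0 r (by omega)]
          exact ⟨heB, hRes.mem_A⟩
        · rw [Dset_eq k0 r (by omega)]
          exact ⟨heBi, (hRes.inv hcne).mem_A⟩

end FKtower
open FKtower in
set_option maxHeartbeats 3200000 in
set_option synthInstance.maxHeartbeats 400000 in
/-- In the tower construction, for every `n ≥ 2` and every prime ideal
`q` of `Dₙ` with `q ≠ 𝓜ₙ`, there is a unique prime ideal `Q` of `Bₙ` with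
`Q ∩ Dₙ = q`, and moreover `(Dₙ)_q = (Bₙ)_Q`. -/
theorem tower_unique_prime_of_B_over_D
    (k0 : Type) [Field k0] (r : ℕ) (hr : 2 ≤ r) (n : ℕ) (hn : 2 ≤ n) :
    ∀ D' B' : Subring (Amb k0 r),
      (D' : Set (Amb k0 r)) = Dset k0 r n → (B' : Set (Amb k0 r)) = Bset k0 r n →
      ∀ q : Ideal ↥D', q.IsPrime → Subtype.val '' (q : Set ↥D') ≠ MMset k0 r n →
        ∃ Q : Ideal ↥B', Q.IsPrime ∧
          Subtype.val '' (Q : Set ↥B') ∩ Dset k0 r n = Subtype.val '' (q : Set ↥D') ∧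
          (∀ Q' : Ideal ↥B', Q'.IsPrime →
            Subtype.val '' (Q' : Set ↥B') ∩ Dset k0 r n = Subtype.val '' (q : Set ↥D') →
            Q' = Q) ∧
          locAt k0 r (Dset k0 r n) (Subtype.val '' (q : Set ↥D')) =
            locAt k0 r (Bset k0 r n) (Subtype.val '' (Q : Set ↥B')) := by
  classical
  intro D' B' hD' hB' q hq hqne
  set qs : Set (Amb k0 r) := Subtype.val '' (q : Set ↥D') with hqsdef
  have hn1 : 1 ≤ n := by omega
  have hmemD : ∀ {x : Amb k0 r}, x ∈ Dset k0 r n → x ∈ D' := by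
    intro x hx
    rw [← SetLike.mem_coe, hD']
    exact hx
  have hmemD' : ∀ ξ : ↥D', (ξ : Amb k0 r) ∈ Dset k0 r n := by
    intro ξ
    rw [← hD']
    exact ξ.2
  have hmemB : ∀ {x : Amb k0 r}, x ∈ Bset k0 r n → x ∈ B' := by
    intro x hx
    rw [← SetLike.mem_coe, hB']
    exact hx
  have hmemB' : ∀ β : ↥B', (β : Amb k0 r) ∈ Bset k0 r n := by
    intro β
    rw [← hB']
    exact β.2
  have hDB : Dset k0 r n ⊆ Bset k0 r n := by
    rw [Dset_eq k0 r hn]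
    exact Set.inter_subset_left
  have hDA : Dset k0 r n ⊆ Aset k0 r n := Dset_subset_A k0 r hn1
  have hDmul : ∀ {x y : Amb k0 r}, x ∈ Dset k0 r n → y ∈ Dset k0 r n →
      x * y ∈ Dset k0 r n := by
    intro x y hx hy
    have h := D'.mul_mem (hmemD hx) (hmemD hy)
    rw [← SetLike.mem_coe, hD'] at h
    exact h
  have hDpow : ∀ {x : Amb k0 r} (k : ℕ), x ∈ Dset k0 r n → x ^ k ∈ Dset k0 r n := by
    intro x k hx
    have h := D'.pow_mem (hmemD hx) k
    rw [← SetLike.mem_coe, hD'] at h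
    exact h
  have hBmul : ∀ {x y : Amb k0 r}, x ∈ Bset k0 r n → y ∈ Bset k0 r n →
      x * y ∈ Bset k0 r n := by
    intro x y hx hy
    have h := B'.mul_mem (hmemB hx) (hmemB hy)
    rw [← SetLike.mem_coe, hB'] at h
    exact h
  have hDsub : ∀ {x y : Amb k0 r}, x ∈ Dset k0 r n → y ∈ Dset k0 r n →
      x - y ∈ Dset k0 r n := by
    intro x y hx hy
    have h := D'.sub_mem (hmemD hx) (hmemD hy)
    rw [← SetLike.mem_coe, hD'] at h
    exact h
  have honeD : (1 : Amb k0 r) ∈ Dset k0 r n := by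
    have h := D'.one_mem
    rw [← SetLike.mem_coe, hD'] at h
    exact h
  have hq_sub : qs ⊆ Dset k0 r n := by
    rintro x ⟨ξ, hξ, rfl⟩
    exact hmemD' ξ
  have hzero_q : (0 : Amb k0 r) ∈ qs := ⟨0, q.zero_mem, rfl⟩
  have hone_not : (1 : Amb k0 r) ∉ qs := by
    rintro ⟨ξ, hξ, hξ1⟩
    have hξeq : ξ = 1 := Subtype.ext hξ1
    rw [hξeq] at hξ
    exact hq.ne_top ((Ideal.eq_top_iff_one q).2 hξ)
  have hadd_q : ∀ {x y : Amb k0 r}, x ∈ qs → y ∈ qs → x + y ∈ qs := by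
    rintro x y ⟨ξ, hξ, rfl⟩ ⟨η, hη, rfl⟩
    exact ⟨ξ + η, q.add_mem hξ hη, rfl⟩
  have hsub_q : ∀ {x y : Amb k0 r}, x ∈ qs → y ∈ qs → x - y ∈ qs := by
    rintro x y ⟨ξ, hξ, rfl⟩ ⟨η, hη, rfl⟩
    exact ⟨ξ - η, q.sub_mem hξ hη, rfl⟩
  have hmul_q : ∀ {x y : Amb k0 r}, x ∈ Dset k0 r n → y ∈ qs → x * y ∈ qs := by
    rintro x y hx ⟨η, hη, rfl⟩
    exact ⟨⟨x, hmemD hx⟩ * η, Ideal.mul_mem_left q _ hη, rfl⟩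
  have hprime_q : ∀ {x y : Amb k0 r}, x ∈ Dset k0 r n → y ∈ Dset k0 r n →
      x * y ∈ qs → x ∈ qs ∨ y ∈ qs := by
    rintro x y hx hy ⟨ζ, hζ, hζeq⟩
    have hζ2 : (⟨x, hmemD hx⟩ : ↥D') * ⟨y, hmemD hy⟩ ∈ q := by
      have heq : ((⟨x, hmemD hx⟩ : ↥D') * ⟨y, hmemD hy⟩ : ↥D') = ζ := Subtype.ext hζeq.symm
      rw [heq]
      exact hζ
    rcases hq.mem_or_mem hζ2 with h | h
    · exact Or.inl ⟨_, h, rfl⟩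
    · exact Or.inr ⟨_, h, rfl⟩
  have hnotq_mul : ∀ {x y : Amb k0 r}, x ∈ Dset k0 r n → y ∈ Dset k0 r n →
      x ∉ qs → y ∉ qs → x * y ∉ qs := by
    intro x y hx hy hxq hyq hmem
    rcases hprime_q hx hy hmem with h | h
    · exact hxq h
    · exact hyq h
  -- STEP 1: there is s ∈ 𝓜ₙ \ qs
  have hs : ∃ s, s ∈ Mset k0 r n ∧ s ∈ Dset k0 r n ∧ s ∉ qs := by
    by_contra hcon
    push_neg at hcon
    have hMsub : MMset k0 r n ⊆ qs := fun s hs => hcon s hs.1 hs.2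
    have hqM : ¬ qs ⊆ MMset k0 r n := fun hsub => hqne (Set.Subset.antisymm hsub hMsub)
    obtain ⟨x, hxq, hxM⟩ := Set.not_subset.1 hqM
    have hxD := hq_sub hxq
    obtain ⟨c, hc, μ, hμ, rfl⟩ := hDA hxD
    have hcne : c ≠ 0 := by
      rintro rfl
      exact hxM ⟨by rw [zero_add]; exact hμ, hxD⟩
    obtain ⟨w, hw, hwinv, hResw⟩ := UL k0 r n hn1 c⁻¹ (Subfield.inv_mem _ hc)
      (inv_ne_zero hcne)
    have hResx : Res k0 r n c (c + μ) := ⟨hc, by rw [add_sub_cancel_left]; exact hμ⟩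
    have h1 : (c + μ) * w - 1 ∈ Mset k0 r n := by
      have h2 := hResx.mul hResw
      rw [mul_inv_cancel₀ hcne] at h2
      exact h2.2
    have h2 : (c + μ) * w ∈ Dset k0 r n := hDmul hxD hw
    have h3 : (c + μ) * w - 1 ∈ Dset k0 r n := hDsub h2 honeD
    have h4 : (c + μ) * w - 1 ∈ qs := hcon _ h1 h3
    have h5 : (c + μ) * w ∈ qs := by
      rw [mul_comm]
      exact hmul_q hw hxq
    have h6 : (1 : Amb k0 r) ∈ qs := by
      have heq : (1 : Amb k0 r) = (c + μ) * w - ((c + μ) * w - 1) := by ring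
      rw [heq]
      exact hsub_q h5 h4
    exact hone_not h6
  obtain ⟨s, hsM, hsD, hsq⟩ := hs
  have hsne : s ≠ 0 := fun h => hsq (h ▸ hzero_q)
  have hpowV : ∀ (j : ℕ) {v : Amb k0 r}, v ∈ Vset k0 r n → v ^ j ∈ Vset k0 r n := by
    intro j
    induction j with
    | zero => intro v _; rw [pow_zero]; exact one_mem_V k0 r n
    | succ j ih => intro v hv; rw [pow_succ]; exact mul_mem_V k0 r n (ih hv) hv
  have hspow_not : ∀ k : ℕ, s ^ k ∉ qs := by
    intro k
    induction k with
    | zero => rw [pow_zero]; exact hone_not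
    | succ k ih =>
        rw [pow_succ]
        exact hnotq_mul (hDpow k hsD) hsD ih hsq
  -- STEP 2: B ⊆ D_q
  have hBloc : ∀ b ∈ Bset k0 r n, ∃ a ∈ Dset k0 r n, ∃ t ∈ Dset k0 r n,
      t ∉ qs ∧ b = a / t := by
    intro b hb
    have hbK : b ∈ Kfld k0 r n := Bset_subset_Kfld k0 r hn hb
    obtain ⟨k, hk⟩ := Y_pow_mul_mem_M k0 r n hbK
    obtain ⟨v, hv, hsval⟩ := hsM
    have hskb : s ^ k * b ∈ Mset k0 r n := by
      have heq : s ^ k * b = v ^ k * ((ambY k0 r) ^ k * b) := by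
        rw [hsval, mul_pow]
        ring
      rw [heq]
      exact V_mul_M k0 r n (hpowV k hv) hk
    have hskB : s ^ k * b ∈ Bset k0 r n := hBmul (hDB (hDpow k hsD)) hb
    have hskbD : s ^ k * b ∈ Dset k0 r n := by
      rw [Dset_eq k0 r hn]
      exact ⟨hskB, M_subset_A k0 r n hskb⟩
    refine ⟨s ^ k * b, hskbD, s ^ k, hDpow k hsD, hspow_not k, ?_⟩
    rw [mul_div_cancel_left₀ _ (pow_ne_zero k hsne)]
  -- STEP 3: the ideal Q
  let Q : Ideal ↥B' :=
    { carrier := {β : ↥B' | ∃ a ∈ qs, ∃ t ∈ Dset k0 r n, t ∉ qs ∧ (β : Amb k0 r) * t = a},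
      zero_mem' := ⟨0, hzero_q, 1, honeD, hone_not, by
        rw [ZeroMemClass.coe_zero, zero_mul]⟩,
      add_mem' := by
        rintro β₁ β₂ ⟨a₁, ha₁, t₁, ht₁, ht₁q, he₁⟩ ⟨a₂, ha₂, t₂, ht₂, ht₂q, he₂⟩
        refine ⟨a₁ * t₂ + a₂ * t₁, hadd_q (by rw [mul_comm]; exact hmul_q ht₂ ha₁)
          (by rw [mul_comm]; exact hmul_q ht₁ ha₂), t₁ * t₂, hDmul ht₁ ht₂,
          hnotq_mul ht₁ ht₂ ht₁q ht₂q, ?_⟩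
        have hcoe : ((β₁ + β₂ : ↥B') : Amb k0 r) = (β₁ : Amb k0 r) + (β₂ : Amb k0 r) := rfl
        rw [hcoe]
        linear_combination t₂ * he₁ + t₁ * he₂,
      smul_mem' := by
        rintro χ β ⟨a, ha, t, ht, htq, he⟩
        obtain ⟨a', ha', t', ht', ht'q, he'⟩ := hBloc (χ : Amb k0 r) (hmemB' χ)
        have ht'ne : t' ≠ 0 := fun h => ht'q (h ▸ hzero_q)
        have he'' : (χ : Amb k0 r) * t' = a' := by
          rw [he', div_mul_cancel₀ _ ht'ne]
        refine ⟨a' * a, hmul_q ha' ha, t' * t, hDmul ht' ht,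
          hnotq_mul ht' ht ht'q htq, ?_⟩
        have hcoe : ((χ • β : ↥B') : Amb k0 r) = (χ : Amb k0 r) * (β : Amb k0 r) := rfl
        rw [hcoe]
        linear_combination (χ : Amb k0 r) * t' * he + a * he'' }
  have hQmem : ∀ β : ↥B', β ∈ Q ↔
      ∃ a ∈ qs, ∃ t ∈ Dset k0 r n, t ∉ qs ∧ (β : Amb k0 r) * t = a := fun β => Iff.rfl
  -- Q is prime
  have hQprime : Q.IsPrime := by
    rw [Ideal.isPrime_iff]
    constructor
    · intro htop
      have h1Q : (1 : ↥B') ∈ Q := htop ▸ Submodule.mem_top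
      obtain ⟨a, ha, t, ht, htq, he⟩ := (hQmem 1).1 h1Q
      rw [OneMemClass.coe_one, one_mul] at he
      exact htq (he ▸ ha)
    · intro β₁ β₂ hmul
      obtain ⟨a, ha, t, ht, htq, he⟩ := (hQmem _).1 hmul
      obtain ⟨a₁, ha₁, t₁, ht₁, ht₁q, he₁⟩ := hBloc (β₁ : Amb k0 r) (hmemB' β₁)
      obtain ⟨a₂, ha₂, t₂, ht₂, ht₂q, he₂⟩ := hBloc (β₂ : Amb k0 r) (hmemB' β₂)
      have ht₁ne : t₁ ≠ 0 := fun h => ht₁q (h ▸ hzero_q)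
      have ht₂ne : t₂ ≠ 0 := fun h => ht₂q (h ▸ hzero_q)
      have he₁' : (β₁ : Amb k0 r) * t₁ = a₁ := by rw [he₁, div_mul_cancel₀ _ ht₁ne]
      have he₂' : (β₂ : Amb k0 r) * t₂ = a₂ := by rw [he₂, div_mul_cancel₀ _ ht₂ne]
      have hcoe : ((β₁ * β₂ : ↥B') : Amb k0 r) = (β₁ : Amb k0 r) * (β₂ : Amb k0 r) := rfl
      rw [hcoe] at he
      have heq : (a₁ * a₂) * t = (t₁ * t₂) * a := by
        rw [← he₁', ← he₂', ← he]
        ring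
      have hkey : (a₁ * a₂) * t ∈ qs := by
        rw [heq]
        exact hmul_q (hDmul ht₁ ht₂) ha
      have ha₁₂ : a₁ * a₂ ∈ qs := by
        rcases hprime_q (hDmul ha₁ ha₂) ht hkey with h | h
        · exact h
        · exact absurd h htq
      rcases hprime_q ha₁ ha₂ ha₁₂ with h | h
      · exact Or.inl ((hQmem β₁).2 ⟨a₁, h, t₁, ht₁, ht₁q, he₁'⟩)
      · exact Or.inr ((hQmem β₂).2 ⟨a₂, h, t₂, ht₂, ht₂q, he₂'⟩)
  -- contraction of Q is q
  have hQD : Subtype.val '' (Q : Set ↥B') ∩ Dset k0 r n = qs := by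
    apply Set.Subset.antisymm
    · rintro x ⟨⟨β, hβ, rfl⟩, hxD⟩
      obtain ⟨a, ha, t, ht, htq, he⟩ := (hQmem β).1 hβ
      rcases hprime_q hxD ht (he ▸ ha) with h | h
      · exact h
      · exact absurd h htq
    · intro a ha
      have haD : a ∈ Dset k0 r n := hq_sub ha
      refine ⟨⟨⟨a, hmemB (hDB haD)⟩, (hQmem _).2 ⟨a, ha, 1, honeD, hone_not, mul_one a⟩, rfl⟩,
        haD⟩
  refine ⟨Q, hQprime, hQD, ?_, ?_⟩
  · -- uniqueness
    intro Q' hQ' hQ'D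
    apply le_antisymm
    · intro β hβ
      obtain ⟨a', ha'D, t', ht'D, ht'q, he'⟩ := hBloc (β : Amb k0 r) (hmemB' β)
      have ht'ne : t' ≠ 0 := fun h => ht'q (h ▸ hzero_q)
      have he'' : (β : Amb k0 r) * t' = a' := by rw [he', div_mul_cancel₀ _ ht'ne]
      have hτB : t' ∈ B' := hmemB (hDB ht'D)
      have hβτ : β * ⟨t', hτB⟩ ∈ Q' := Ideal.mul_mem_right _ _ hβ
      have ha'q : a' ∈ qs := by
        rw [← hQ'D]
        refine ⟨⟨β * ⟨t', hτB⟩, hβτ, ?_⟩, ha'D⟩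
        have hcoe : ((β * ⟨t', hτB⟩ : ↥B') : Amb k0 r) = (β : Amb k0 r) * t' := rfl
        rw [hcoe]
        exact he''
      exact (hQmem β).2 ⟨a', ha'q, t', ht'D, ht'q, he''⟩
    · intro β hβ
      obtain ⟨a, ha, t, ht, htq, he⟩ := (hQmem β).1 hβ
      rw [← hQ'D] at ha
      obtain ⟨⟨ζ, hζ, hζeq⟩, haD⟩ := ha
      have hτB : t ∈ B' := hmemB (hDB ht)
      have hβτζ : β * ⟨t, hτB⟩ = ζ := by
        apply Subtype.ext
        have hcoe : ((β * ⟨t, hτB⟩ : ↥B') : Amb k0 r) = (β : Amb k0 r) * t := rfl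
        rw [hcoe, he, hζeq]
      have hβτ : β * ⟨t, hτB⟩ ∈ Q' := by rw [hβτζ]; exact hζ
      rcases hQ'.mem_or_mem hβτ with h | h
      · exact h
      · exfalso
        apply htq
        rw [← hQ'D]
        exact ⟨⟨⟨t, hτB⟩, h, rfl⟩, ht⟩
  · -- localization equality
    apply Set.Subset.antisymm
    · rintro x ⟨a, haD, t, htD, htq, rfl⟩
      refine ⟨a, hDB haD, t, hDB htD, ?_, rfl⟩
      intro htQ
      apply htq
      rw [← hQD]
      exact ⟨htQ, htD⟩
    · rintro x ⟨b, hbB, τ, hτB, hτQ, rfl⟩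
      have hτne : τ ≠ 0 := by
        rintro rfl
        exact hτQ ⟨0, Q.zero_mem, rfl⟩
      obtain ⟨a₁, ha₁, t₁, ht₁, ht₁q, he₁⟩ := hBloc b hbB
      obtain ⟨a₂, ha₂, t₂, ht₂, ht₂q, he₂⟩ := hBloc τ hτB
      have ht₁ne : t₁ ≠ 0 := fun h => ht₁q (h ▸ hzero_q)
      have ht₂ne : t₂ ≠ 0 := fun h => ht₂q (h ▸ hzero_q)
      have he₂' : τ * t₂ = a₂ := by rw [he₂, div_mul_cancel₀ _ ht₂ne]
      have ha₂ne : a₂ ≠ 0 := by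
        rw [← he₂']
        exact mul_ne_zero hτne ht₂ne
      have ha₂q : a₂ ∉ qs := by
        intro hmem
        apply hτQ
        exact ⟨⟨τ, hmemB hτB⟩, (hQmem _).2 ⟨a₂, hmem, t₂, ht₂, ht₂q, he₂'⟩, rfl⟩
      refine ⟨a₁ * t₂, hDmul ha₁ ht₂, t₁ * a₂, hDmul ht₁ ha₂,
        hnotq_mul ht₁ ha₂ ht₁q ha₂q, ?_⟩
      rw [he₁, he₂]
      field_simp
end FKHelpers
end
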